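/- arXiv:2002.05571 — 6 statements merged into one kernel-verified Lean document; each statement's English description precedes it below -/
import Mathlib

section
/- Suppose K < x0 and T > 0. Let μ be a finite nonnegative Borel measure on ℝ with v_μ(θ,x) ≥ g(x) for all (θ,x) ∈ (0,T]×ℝ, and define s(μ) := μ|_{(-∞,K]} + μ((K,∞))·δ_K, where δ_K is the Dirac measure at K. Then s(μ) has the same total mass as μ, and s(μ) satisfies v_{s(μ)}(θ,x) ≥ v_μ(θ,x) ≥ g(x) for all (θ,x) ∈ (0,T]×(-∞,K); since g vanishes on [K,∞), s(μ) is again admissible for programme (P) with the same cost v_{s(μ)}(T,x0) = v_μ(T,x0). Consequently, in programme (P) it suffices to minimize over measures concentrated on (-∞,K]. -/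
open MeasureTheory Filter Set
open scoped ENNReal NNReal

/-- Gaussian density with mean `m` and variance `s2`. -/
noncomputable def gauss (m s2 y : ℝ) : ℝ :=
  (Real.sqrt (2 * Real.pi * s2))⁻¹ * Real.exp (-((y - m) ^ 2) / (2 * s2))

/-- The kernel `N(x + r̂θ, σ²θ, y) / N(x0 + r̂T, σ²T, y)` with `r̂ = r - σ²/2`. -/
noncomputable def kern (r σ x0 T θ x y : ℝ) : ℝ :=
  gauss (x + (r - σ ^ 2 / 2) * θ) (σ ^ 2 * θ) y /
    gauss (x0 + (r - σ ^ 2 / 2) * T) (σ ^ 2 * T) y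

/-- Generalised European value for `θ > 0`. -/
noncomputable def veuPos (r σ x0 T : ℝ) (μ : Measure ℝ) (θ x : ℝ) : ℝ≥0∞ :=
  ENNReal.ofReal (Real.exp (-(r * θ))) * ∫⁻ y, ENNReal.ofReal (kern r σ x0 T θ x y) ∂μ

/-- Generalised European value, extended to `θ = 0` by a lower limit. -/
noncomputable def veu (r σ x0 T : ℝ) (μ : Measure ℝ) (θ x : ℝ) : ℝ≥0∞ :=
  if θ = 0 then
    Filter.liminf (fun p : ℝ × ℝ => veuPos r σ x0 T μ p.1 p.2)
      (nhdsWithin ((0 : ℝ), x) {p : ℝ × ℝ | 0 < p.1})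
  else veuPos r σ x0 T μ θ x

/-- The standing assumptions on the American payoff
`g = 1_{(-∞,K]} φ`:  `φ` extends to an analytic function on a complex
domain containing `(-∞,K]`, is positive on `(-∞,K)`, vanishes at `K`,
satisfies a growth condition at `-∞` and the necessary concavity condition. -/
def GPayoff (r σ K : ℝ) (g : ℝ → ℝ) : Prop :=
  (∀ x, K < x → g x = 0) ∧ (∀ x, x < K → 0 < g x) ∧ g K = 0 ∧
  (∃ (U : Set ℂ) (φ : ℂ → ℂ), IsOpen U ∧ IsConnected U ∧
      (∀ x : ℝ, x ≤ K → (x : ℂ) ∈ U) ∧ AnalyticOnNhd ℂ φ U ∧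
      (∀ x : ℝ, x ≤ K → φ (x : ℂ) = ((g x : ℝ) : ℂ))) ∧
  Filter.Tendsto (fun x => Real.exp ((2 * r / σ ^ 2) * x) * g x) Filter.atBot (nhds 0) ∧
  (∀ x, x < K →
    deriv (deriv g) x - (2 * r / σ ^ 2) * (g x - deriv g x) - deriv g x ≤ 0)

section Aux

lemma gauss_pos (m y : ℝ) {s2 : ℝ} (hs : 0 < s2) : 0 < gauss m s2 y := by
  unfold gauss
  have := Real.pi_pos
  positivity

/-- On `[K, ∞)` the kernel (for `x < K < x0`, `0 < θ ≤ T`) is maximised at `K`. -/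
lemma kern_le_kern_K (r σ x0 T K : ℝ) (hσ : 0 < σ) {θ x y : ℝ}
    (hθ : 0 < θ) (hθT : θ ≤ T) (hx : x < K) (hK : K < x0) (hy : K ≤ y) :
    kern r σ x0 T θ x y ≤ kern r σ x0 T θ x K := by
  have hT : 0 < T := lt_of_lt_of_le hθ hθT
  have hs1 : 0 < σ ^ 2 * θ := by positivity
  have hs2 : 0 < σ ^ 2 * T := by positivity
  set m1 := x + (r - σ ^ 2 / 2) * θ with hm1
  set m2 := x0 + (r - σ ^ 2 / 2) * T with hm2
  have hnum : 0 ≤ (σ ^ 2 * T) * ((y - m1) ^ 2 - (K - m1) ^ 2)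
      - (σ ^ 2 * θ) * ((y - m2) ^ 2 - (K - m2) ^ 2) := by
    have h1 : 0 ≤ σ ^ 2 * (y - K) * ((T - θ) * (y - K)) := by
      have := sub_nonneg.2 hy; have := sub_nonneg.2 hθT; positivity
    have h2 : 0 ≤ σ ^ 2 * (y - K) * (T * (K - x)) := by
      have := sub_nonneg.2 hy; have hx' := sub_nonneg.2 hx.le; positivity
    have h3 : 0 ≤ σ ^ 2 * (y - K) * (θ * (x0 - K)) := by
      have := sub_nonneg.2 hy; have := sub_nonneg.2 hK.le; positivity
    rw [hm1, hm2]; nlinarith [h1, h2, h3]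
  have key : -((y - m1) ^ 2) / (2 * (σ ^ 2 * θ)) - (-((y - m2) ^ 2) / (2 * (σ ^ 2 * T)))
      ≤ -((K - m1) ^ 2) / (2 * (σ ^ 2 * θ)) - (-((K - m2) ^ 2) / (2 * (σ ^ 2 * T))) := by
    rw [← sub_nonneg]
    have heq : -((K - m1) ^ 2) / (2 * (σ ^ 2 * θ)) - (-((K - m2) ^ 2) / (2 * (σ ^ 2 * T)))
        - (-((y - m1) ^ 2) / (2 * (σ ^ 2 * θ)) - (-((y - m2) ^ 2) / (2 * (σ ^ 2 * T))))
        = ((σ ^ 2 * T) * ((y - m1) ^ 2 - (K - m1) ^ 2)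
            - (σ ^ 2 * θ) * ((y - m2) ^ 2 - (K - m2) ^ 2))
          / (2 * ((σ ^ 2 * θ) * (σ ^ 2 * T))) := by
      field_simp
      ring
    rw [heq]
    exact div_nonneg hnum (by positivity)
  unfold kern gauss
  rw [mul_div_mul_comm, mul_div_mul_comm, ← Real.exp_sub, ← Real.exp_sub]
  apply mul_le_mul_of_nonneg_left (Real.exp_le_exp.2 key)
  have h2π : (0:ℝ) < 2 * Real.pi * (σ ^ 2 * θ) := by have := Real.pi_pos; positivity
  positivity

/-- Total mass of the relocated measure. -/
lemma relocate_univ (μ : Measure ℝ) (K : ℝ) :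
    (μ.restrict (Set.Iic K) + μ (Set.Ioi K) • Measure.dirac K) Set.univ = μ Set.univ := by
  rw [Measure.add_apply, Measure.restrict_apply MeasurableSet.univ, Set.univ_inter,
    Measure.smul_apply, Measure.dirac_apply, smul_eq_mul]
  simp only [Set.mem_univ, Set.indicator_of_mem, Pi.one_apply, mul_one]
  rw [← Set.compl_Iic]
  exact measure_add_measure_compl measurableSet_Iic

lemma lintegral_le_relocate (μ : Measure ℝ) (K : ℝ) (f : ℝ → ℝ≥0∞)
    (hb : ∀ y ∈ Set.Ioi K, f y ≤ f K) :
    ∫⁻ y, f y ∂μ ≤ ∫⁻ y, f y ∂(μ.restrict (Set.Iic K) + μ (Set.Ioi K) • Measure.dirac K) := by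
  rw [lintegral_add_measure, lintegral_smul_measure, lintegral_dirac]
  rw [← lintegral_add_compl f measurableSet_Iic (μ := μ), Set.compl_Iic]
  gcongr
  calc ∫⁻ y in Set.Ioi K, f y ∂μ ≤ ∫⁻ _ in Set.Ioi K, f K ∂μ :=
        setLIntegral_mono measurable_const hb
    _ = μ (Set.Ioi K) * f K := by rw [setLIntegral_const]; ring

/-- Relocation increases the `θ > 0` value at points `x < K`. -/
lemma veuPos_le_relocate (r σ x0 T K : ℝ) (hσ : 0 < σ) (hK : K < x0) (μ : Measure ℝ)
    {θ x : ℝ} (hθ : 0 < θ) (hθT : θ ≤ T) (hx : x < K) :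
    veuPos r σ x0 T μ θ x ≤
      veuPos r σ x0 T (μ.restrict (Set.Iic K) + μ (Set.Ioi K) • Measure.dirac K) θ x := by
  unfold veuPos
  refine mul_le_mul_right ?_ _
  exact lintegral_le_relocate μ K _ fun y hy =>
    ENNReal.ofReal_le_ofReal (kern_le_kern_K r σ x0 T K hσ hθ hθT hx hK (le_of_lt hy))

lemma g_continuousAt (r σ K : ℝ) (g : ℝ → ℝ) (hg : GPayoff r σ K g)
    {x : ℝ} (hx : x < K) : ContinuousAt g x := by
  obtain ⟨-, -, -, ⟨U, φ, hUo, -, hmem, hana, heq⟩, -, -⟩ := hg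
  have hxa : AnalyticAt ℂ φ (x : ℂ) := hana _ (hmem x hx.le)
  have hc : ContinuousAt (fun t : ℝ => (φ (t : ℂ)).re) x :=
    Complex.continuous_re.continuousAt.comp
      (hxa.continuousAt.comp Complex.continuous_ofReal.continuousAt)
  apply hc.congr
  filter_upwards [isOpen_Iio.mem_nhds hx] with t ht
  rw [heq t (le_of_lt ht), Complex.ofReal_re]

/-- The value at `(T, x0)` of any measure is `e^{-rT}` times its total mass. -/
lemma veuPos_final (r σ x0 T : ℝ) (hσ : 0 < σ) (hT : 0 < T) (μ : Measure ℝ) :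
    veuPos r σ x0 T μ T x0 = ENNReal.ofReal (Real.exp (-(r * T))) * μ Set.univ := by
  unfold veuPos
  congr 1
  have hker : ∀ y : ℝ, kern r σ x0 T T x0 y = 1 := by
    intro y
    unfold kern
    exact div_self (gauss_pos _ _ (by positivity)).ne'
  simp only [hker, ENNReal.ofReal_one, lintegral_one]

end Aux

/-- Admissibility for programme (P): the generalised European value dominates
the American payoff on `[0,T] × ℝ`. -/
def Admissible (r σ x0 T : ℝ) (g : ℝ → ℝ) (μ : Measure ℝ) : Prop :=
  ∀ θ ∈ Set.Icc (0 : ℝ) T, ∀ x : ℝ, ENNReal.ofReal (g x) ≤ veu r σ x0 T μ θ x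

/-- Relocating the mass of an admissible measure `μ` from `(K,∞)`
to the point `K` preserves the total mass and the cost, dominates `v_μ` on
`(0,T] × (-∞,K)`, and yields again an admissible measure for programme (P). -/
theorem relocated_measure_admissible
    (r σ T x0 K : ℝ) (hr : 0 ≤ r) (hσ : 0 < σ) (hT : 0 < T) (hK : K < x0)
    (g : ℝ → ℝ) (hg : GPayoff r σ K g)
    (μ : Measure ℝ) [IsFiniteMeasure μ]
    (hadm : ∀ θ ∈ Set.Ioc (0 : ℝ) T, ∀ x : ℝ,
      ENNReal.ofReal (g x) ≤ veu r σ x0 T μ θ x) :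
    (μ.restrict (Set.Iic K) + μ (Set.Ioi K) • Measure.dirac K) Set.univ = μ Set.univ ∧
    (∀ θ ∈ Set.Ioc (0 : ℝ) T, ∀ x : ℝ, x < K →
      ENNReal.ofReal (g x) ≤ veu r σ x0 T μ θ x ∧
      veu r σ x0 T μ θ x ≤
        veu r σ x0 T (μ.restrict (Set.Iic K) + μ (Set.Ioi K) • Measure.dirac K) θ x) ∧
    Admissible r σ x0 T g (μ.restrict (Set.Iic K) + μ (Set.Ioi K) • Measure.dirac K) ∧
    veu r σ x0 T (μ.restrict (Set.Iic K) + μ (Set.Ioi K) • Measure.dirac K) T x0 =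
      veu r σ x0 T μ T x0 := by
  set ν := μ.restrict (Set.Iic K) + μ (Set.Ioi K) • Measure.dirac K with hν
  have hmass : ν Set.univ = μ Set.univ := relocate_univ μ K
  have hcomp : ∀ θ ∈ Set.Ioc (0 : ℝ) T, ∀ x : ℝ, x < K →
      ENNReal.ofReal (g x) ≤ veu r σ x0 T μ θ x ∧
      veu r σ x0 T μ θ x ≤ veu r σ x0 T ν θ x := by
    intro θ hθ x hx
    refine ⟨hadm θ hθ x, ?_⟩
    rw [veu, veu, if_neg hθ.1.ne', if_neg hθ.1.ne']
    exact veuPos_le_relocate r σ x0 T K hσ hK μ hθ.1 hθ.2 hx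
  refine ⟨hmass, fun θ hθ x hx => hcomp θ hθ x hx, ?_, ?_⟩
  · -- admissibility of the relocated measure
    intro θ hθ x
    rcases lt_or_ge x K with hx | hx
    · -- x < K
      rcases eq_or_lt_of_le hθ.1 with hθ0 | hθ0
      · -- θ = 0 : use the liminf
        subst hθ0
        rw [veu, if_pos rfl]
        set L := nhdsWithin ((0 : ℝ), x) {p : ℝ × ℝ | 0 < p.1} with hL
        have htend : Tendsto (fun t : ℝ => ((t, x) : ℝ × ℝ))
            (nhdsWithin 0 (Set.Ioi 0)) L := by
          apply tendsto_nhdsWithin_of_tendsto_nhds_of_eventually_within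
          · exact (Continuous.tendsto (by continuity) 0).mono_left nhdsWithin_le_nhds
          · exact eventually_mem_nhdsWithin.mono fun t ht => ht
        haveI : L.NeBot := htend.neBot
        have h1 : ∀ᶠ p : ℝ × ℝ in L, 0 < p.1 := self_mem_nhdsWithin
        have h2 : ∀ᶠ p : ℝ × ℝ in L, p.1 < T :=
          Filter.Eventually.filter_mono nhdsWithin_le_nhds
            ((continuousAt_fst : ContinuousAt Prod.fst ((0:ℝ), x)).eventually_lt_const hT)
        have h3 : ∀ᶠ p : ℝ × ℝ in L, p.2 < K :=
          Filter.Eventually.filter_mono nhdsWithin_le_nhds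
            ((continuousAt_snd : ContinuousAt Prod.snd ((0:ℝ), x)).eventually_lt_const hx)
        have hev : ∀ᶠ p : ℝ × ℝ in L,
            ENNReal.ofReal (g p.2) ≤ veuPos r σ x0 T ν p.1 p.2 := by
          filter_upwards [h1, h2, h3] with p hp1 hp2 hp3
          have hcp := hcomp p.1 ⟨hp1, hp2.le⟩ p.2 hp3
          rw [veu, veu, if_neg hp1.ne', if_neg hp1.ne'] at hcp
          exact hcp.1.trans hcp.2
        have hlim : Tendsto (fun p : ℝ × ℝ => ENNReal.ofReal (g p.2)) L
            (nhds (ENNReal.ofReal (g x))) :=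
          (ENNReal.continuous_ofReal.tendsto _).comp
            (((g_continuousAt r σ K g hg hx).tendsto).comp
              (continuousAt_snd.tendsto.mono_left nhdsWithin_le_nhds))
        calc ENNReal.ofReal (g x)
            = Filter.liminf (fun p : ℝ × ℝ => ENNReal.ofReal (g p.2)) L :=
              hlim.liminf_eq.symm
          _ ≤ Filter.liminf (fun p : ℝ × ℝ => veuPos r σ x0 T ν p.1 p.2) L :=
              Filter.liminf_le_liminf hev
      · -- θ > 0
        exact ((hcomp θ ⟨hθ0, hθ.2⟩ x hx).1).trans (hcomp θ ⟨hθ0, hθ.2⟩ x hx).2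
    · -- x ≥ K : g x = 0
      have hg0 : g x = 0 := by
        rcases eq_or_lt_of_le hx with h | h
        · rw [← h]; exact hg.2.2.1
        · exact hg.1 x h
      simp [hg0]
  · -- equal cost
    rw [veu, veu, if_neg hT.ne', if_neg hT.ne', veuPos_final r σ x0 T hσ hT,
      veuPos_final r σ x0 T hσ hT, hmass]
end

section
/- Let μ be a finite signed Borel measure on (-∞,K]. If the function Tμ(t,x) := ∫ κ(t,x,y) μ(dy) vanishes on some nonempty open subset of Ω := (0,T)×(-∞,K], then μ = 0. In particular, the operator μ ↦ Tμ is injective on finite signed Borel measures on (-∞,K]. -/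
open MeasureTheory Filter Set
open scoped ENNReal NNReal

/-- The kernel `κ(t,x,y) = N(x + r̃(T-t), σ²(T-t), y) / N(x0 + r̃T, σ²T, y)`
with `r̃ = -r - σ²/2`. -/
noncomputable def kappa (r σ x0 T t x y : ℝ) : ℝ :=
  gauss (x + (-r - σ ^ 2 / 2) * (T - t)) (σ ^ 2 * (T - t)) y /
    gauss (x0 + (-r - σ ^ 2 / 2) * T) (σ ^ 2 * T) y

/-- The operator `T` applied to a finite signed measure, via its
Jordan decomposition. -/
noncomputable def Tsigned (r σ x0 T : ℝ) (s : SignedMeasure ℝ) (t x : ℝ) : ℝ :=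
  (∫ y, kappa r σ x0 T t x y ∂s.toJordanDecomposition.posPart) -
    ∫ y, kappa r σ x0 T t x y ∂s.toJordanDecomposition.negPart

open Metric Topology

set_option maxHeartbeats 1000000

section auxiliary

lemma kappa_eq (r σ x0 T t x : ℝ) (hσ : 0 < σ) (ht : 0 < t) (htT : t < T) :
    ∃ c > 0, ∀ y, kappa r σ x0 T t x y =
      c * Real.exp (((2*(σ^2*T))⁻¹ - (2*(σ^2*(T-t)))⁻¹) * y^2 +
        ((x + (-r-σ^2/2)*(T-t))/(σ^2*(T-t)) - (x0 + (-r-σ^2/2)*T)/(σ^2*T)) * y) := by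
  have hs1 : (0:ℝ) < σ^2*(T-t) := by have h := pow_pos hσ 2; nlinarith
  have hs0 : (0:ℝ) < σ^2*T := by nlinarith
  have h2 : (0:ℝ) < 2*Real.pi*(σ^2*(T-t)) := by have := Real.pi_pos; nlinarith
  have h2' : (0:ℝ) < 2*Real.pi*(σ^2*T) := by have := Real.pi_pos; nlinarith
  set m1 := x + (-r-σ^2/2)*(T-t) with hm1
  set m0 := x0 + (-r-σ^2/2)*T with hm0
  refine ⟨Real.sqrt (2*Real.pi*(σ^2*T)) / Real.sqrt (2*Real.pi*(σ^2*(T-t))) *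
    Real.exp (m0^2/(2*(σ^2*T)) - m1^2/(2*(σ^2*(T-t)))),
    mul_pos (div_pos (Real.sqrt_pos.2 h2') (Real.sqrt_pos.2 h2)) (Real.exp_pos _),
    fun y => ?_⟩
  unfold kappa gauss
  rw [div_eq_iff (by positivity)]
  rw [← hm1, ← hm0]
  have hexp : (-(y-m1)^2/(2*(σ^2*(T-t)))) = (m0^2/(2*(σ^2*T)) - m1^2/(2*(σ^2*(T-t))))
      + (((2*(σ^2*T))⁻¹ - (2*(σ^2*(T-t)))⁻¹) * y^2 + (m1/(σ^2*(T-t)) - m0/(σ^2*T)) * y)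
      + (-(y-m0)^2/(2*(σ^2*T))) := by
    field_simp
    ring
  rw [hexp, Real.exp_add, Real.exp_add]
  set a := Real.sqrt (2*Real.pi*(σ^2*(T-t))) with hha
  set b := Real.sqrt (2*Real.pi*(σ^2*T)) with hhb
  have ha : a ≠ 0 := ne_of_gt (Real.sqrt_pos.2 h2)
  have hb : b ≠ 0 := ne_of_gt (Real.sqrt_pos.2 h2')
  field_simp


lemma exp_quad_le (A B y : ℝ) (hA : A < 0) :
    Real.exp (A*y^2 + B*y) ≤ Real.exp (B^2/(4*(-A))) := by
  apply Real.exp_le_exp.2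
  rw [le_div_iff₀ (by linarith)]
  nlinarith [sq_nonneg (2*A*y + B)]

lemma integrable_exp_quad (A B : ℝ) (hA : A < 0) (μ : Measure ℝ) [IsFiniteMeasure μ] :
    Integrable (fun y => Real.exp (A*y^2 + B*y)) μ := by
  refine Integrable.mono' (integrable_const (Real.exp (B^2/(4*(-A)))))
    (Continuous.aestronglyMeasurable (by fun_prop)) ?_
  filter_upwards with y
  rw [Real.norm_eq_abs, abs_of_pos (Real.exp_pos _)]
  exact exp_quad_le A B y hA

lemma cexp_quad_norm (A : ℝ) (z : ℂ) (y : ℝ) :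
    ‖Complex.exp ((A*y^2 : ℝ) + z*y)‖ = Real.exp (A*y^2 + z.re*y) := by
  rw [Complex.norm_exp]
  congr 1
  simp [Complex.add_re, Complex.mul_re, ← Complex.ofReal_pow]

lemma diff_int_cexp (A : ℝ) (hA : A < 0) (μ : Measure ℝ) [IsFiniteMeasure μ] :
    Differentiable ℂ (fun z : ℂ => ∫ y, Complex.exp ((A*y^2 : ℝ) + z*y) ∂μ) := by
  intro z₀
  have key := hasDerivAt_integral_of_dominated_loc_of_deriv_le (𝕜 := ℂ)
    (μ := μ) (x₀ := z₀)
    (F := fun z y => Complex.exp ((A*y^2 : ℝ) + z*y))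
    (F' := fun z y => Complex.exp ((A*y^2 : ℝ) + z*y) * y)
    (bound := fun _ => Real.exp ((‖z₀‖+2)^2/(4*(-A)))) (Metric.ball_mem_nhds z₀ one_pos)
    ?_ ?_ ?_ ?_ ?_ ?_
  · exact key.2.differentiableAt
  · filter_upwards with z
    exact Continuous.aestronglyMeasurable (by fun_prop)
  · refine Integrable.mono' (integrable_const (Real.exp ((z₀.re)^2/(4*(-A)))))
      (Continuous.aestronglyMeasurable (by fun_prop)) ?_
    filter_upwards with y
    rw [cexp_quad_norm]
    exact exp_quad_le A z₀.re y hA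
  · exact Continuous.aestronglyMeasurable (by fun_prop)
  · filter_upwards with y z hz
    rw [norm_mul, cexp_quad_norm, Complex.norm_real, Real.norm_eq_abs]
    have h1 : ‖z‖ ≤ ‖z₀‖ + 1 := by
      have hb := mem_ball_iff_norm.mp hz
      calc ‖z‖ = ‖z₀ + (z - z₀)‖ := by ring_nf
        _ ≤ ‖z₀‖ + ‖z - z₀‖ := norm_add_le _ _
        _ ≤ ‖z₀‖ + 1 := by linarith
    have h2 : z.re * y ≤ (‖z₀‖+1)*|y| := by
      calc z.re * y ≤ |z.re * y| := le_abs_self _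
        _ = |z.re| * |y| := abs_mul _ _
        _ ≤ (‖z₀‖+1) * |y| := by
            apply mul_le_mul_of_nonneg_right _ (abs_nonneg y)
            exact (Complex.abs_re_le_norm z).trans h1
    have h3 : |y| ≤ Real.exp |y| := le_trans (by linarith) (Real.add_one_le_exp |y|)
    calc Real.exp (A*y^2 + z.re*y) * |y|
        ≤ Real.exp (A*y^2 + (‖z₀‖+1)*|y|) * Real.exp |y| := by
          apply mul_le_mul _ h3 (abs_nonneg y) (Real.exp_pos _).le
          exact Real.exp_le_exp.2 (by linarith)
      _ = Real.exp (A*|y|^2 + (‖z₀‖+2)*|y|) := by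
          rw [← Real.exp_add]; congr 1; rw [sq_abs]; ring
      _ ≤ Real.exp ((‖z₀‖+2)^2/(4*(-A))) := exp_quad_le A _ _ hA
  · exact integrable_const _
  · filter_upwards with y z _
    have h : HasDerivAt (fun z : ℂ => ((A*y^2 : ℝ) + z*y : ℂ)) (y : ℂ) z := by
      have := ((hasDerivAt_id z).mul_const (y:ℂ)).const_add ((A*y^2 : ℝ) : ℂ)
      simpa [id] using this
    exact h.cexp

lemma int_cexp_ofReal (A β : ℝ) (μ : Measure ℝ) :
    ∫ y, Complex.exp ((A*y^2 : ℝ) + (β:ℂ)*y) ∂μ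
      = ((∫ y, Real.exp (A*y^2+β*y) ∂μ : ℝ) : ℂ) := by
  calc ∫ y, Complex.exp ((A*y^2 : ℝ) + (β:ℂ)*y) ∂μ
      = ∫ y, ((Real.exp (A*y^2+β*y) : ℝ) : ℂ) ∂μ := by
        congr 1
        ext y
        rw [Complex.ofReal_exp]
        push_cast
        ring_nf
    _ = _ := integral_ofReal

lemma laplace_all (A : ℝ) (hA : A < 0) (μ ν : Measure ℝ)
    [IsFiniteMeasure μ] [IsFiniteMeasure ν] (β1 δ : ℝ) (hδ : 0 < δ)
    (h : ∀ β ∈ Ioo (β1-δ) (β1+δ),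
      ∫ y, Real.exp (A*y^2+β*y) ∂μ = ∫ y, Real.exp (A*y^2+β*y) ∂ν) :
    ∀ β : ℝ, ∫ y, Real.exp (A*y^2+β*y) ∂μ = ∫ y, Real.exp (A*y^2+β*y) ∂ν := by
  set F : ℂ → ℂ := fun z =>
    (∫ y, Complex.exp ((A*y^2 : ℝ) + z*y) ∂μ) - ∫ y, Complex.exp ((A*y^2 : ℝ) + z*y) ∂ν
    with hF
  have hdiff : Differentiable ℂ F := (diff_int_cexp A hA μ).sub (diff_int_cexp A hA ν)
  have han : AnalyticOnNhd ℂ F univ := fun z _ => hdiff.analyticAt z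
  have hreal : ∀ β : ℝ, F β = ((∫ y, Real.exp (A*y^2+β*y) ∂μ
      - ∫ y, Real.exp (A*y^2+β*y) ∂ν : ℝ) : ℂ) := by
    intro β
    rw [hF]
    simp only [int_cexp_ofReal]
    push_cast
    ring
  have hzero : ∀ β ∈ Ioo (β1-δ) (β1+δ), F β = 0 := by
    intro β hβ
    rw [hreal β, h β hβ]
    simp
  -- sequence approaching β1 from the right
  set u : ℕ → ℂ := fun n => ((β1 + δ/(n+2) : ℝ) : ℂ) with hu
  have hpos : ∀ n : ℕ, 0 < δ/((n:ℝ)+2) := fun n => div_pos hδ (by positivity)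
  have hlt : ∀ n : ℕ, δ/((n:ℝ)+2) < δ := by
    intro n
    rw [div_lt_iff₀ (by positivity)]
    nlinarith
  have htend : Tendsto u atTop (𝓝[≠] (β1:ℂ)) := by
    apply tendsto_nhdsWithin_of_tendsto_nhds_of_eventually_within
    · apply (Complex.continuous_ofReal.tendsto β1).comp
      have h1 : Tendsto (fun n : ℕ => δ/((n:ℝ)+2)) atTop (𝓝 0) := by
        apply Tendsto.div_atTop tendsto_const_nhds
        exact tendsto_atTop_add_const_right _ 2 tendsto_natCast_atTop_atTop
      simpa using (tendsto_const_nhds (x := β1)).add h1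
    · filter_upwards with n
      simp only [hu, mem_compl_iff, mem_singleton_iff, ne_eq, Complex.ofReal_inj]
      have := hpos n
      intro hcon
      linarith
  have hfreq : ∃ᶠ z in 𝓝[≠] (β1:ℂ), F z = 0 :=
    htend.frequently (Frequently.of_forall fun n => by
      apply hzero
      constructor
      · have := hpos n; linarith
      · have := hlt n; linarith)
  have hEq : EqOn F 0 univ :=
    han.eqOn_zero_of_preconnected_of_frequently_eq_zero isPreconnected_univ (mem_univ _) hfreq
  intro β
  have := hEq (mem_univ (β:ℂ))
  simp only [Pi.zero_apply] at this
  rw [hreal β] at this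
  have h2 : (∫ y, Real.exp (A*y^2+β*y) ∂μ - ∫ y, Real.exp (A*y^2+β*y) ∂ν : ℝ) = 0 := by
    exact_mod_cast this
  linarith

lemma measure_eq_of_laplace (A K : ℝ) (hA : A < 0) (μ ν : Measure ℝ)
    [IsFiniteMeasure μ] [IsFiniteMeasure ν] (hμK : μ (Ioi K) = 0) (hνK : ν (Ioi K) = 0)
    (h : ∀ β : ℝ, ∫ y, Real.exp (A*y^2+β*y) ∂μ = ∫ y, Real.exp (A*y^2+β*y) ∂ν) :
    μ = ν := by
  classical
  set w : ℝ → ℝ≥0 := fun y => Real.toNNReal (Real.exp (A*y^2)) with hw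
  have hwcont : Continuous fun y => Real.exp (A*y^2) := by fun_prop
  have hwmeas : Measurable w := hwcont.measurable.real_toNNReal
  have hwEmeas : Measurable fun y => (w y : ℝ≥0∞) := hwmeas.coe_nnreal_ennreal
  have hwle : ∀ y, (w y : ℝ≥0∞) ≤ 1 := by
    intro y
    rw [hw]
    simp only [ENNReal.coe_le_one_iff]
    rw [Real.toNNReal_le_one]
    exact Real.exp_le_one_iff.2 (by nlinarith [sq_nonneg y])
  set ρμ := μ.withDensity (fun y => (w y : ℝ≥0∞)) with hρμ
  set ρν := ν.withDensity (fun y => (w y : ℝ≥0∞)) with hρν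
  have hfinμ : IsFiniteMeasure ρμ := by
    refine isFiniteMeasure_withDensity ?_
    refine ne_top_of_le_ne_top (measure_ne_top μ univ) ?_
    calc ∫⁻ y, (w y : ℝ≥0∞) ∂μ ≤ ∫⁻ _, 1 ∂μ := lintegral_mono (hwle)
      _ = μ univ := by simp
  have hfinν : IsFiniteMeasure ρν := by
    refine isFiniteMeasure_withDensity ?_
    refine ne_top_of_le_ne_top (measure_ne_top ν univ) ?_
    calc ∫⁻ y, (w y : ℝ≥0∞) ∂ν ≤ ∫⁻ _, 1 ∂ν := lintegral_mono (hwle)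
      _ = ν univ := by simp
  -- integral conversion
  have hconv : ∀ (m : Measure ℝ) (g : ℝ → ℝ),
      ∫ y, g y ∂(m.withDensity (fun y => (w y : ℝ≥0∞))) = ∫ y, Real.exp (A*y^2) * g y ∂m := by
    intro m g
    rw [integral_withDensity_eq_integral_smul hwmeas]
    congr 1
    ext y
    rw [NNReal.smul_def, smul_eq_mul, hw]
    congr 1
    exact Real.coe_toNNReal _ (Real.exp_pos _).le
  set P := ρμ.map Real.exp with hP
  set Q := ρν.map Real.exp with hQ
  have hfinP : IsFiniteMeasure P := by
    refine ⟨?_⟩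
    rw [hP, Measure.map_apply Real.measurable_exp MeasurableSet.univ]
    exact lt_of_le_of_lt (measure_mono (subset_univ _)) hfinμ.measure_univ_lt_top
  have hfinQ : IsFiniteMeasure Q := by
    refine ⟨?_⟩
    rw [hQ, Measure.map_apply Real.measurable_exp MeasurableSet.univ]
    exact lt_of_le_of_lt (measure_mono (subset_univ _)) hfinν.measure_univ_lt_top
  set M := Real.exp K with hM
  -- a.e. support
  have hsupp : ∀ (m : Measure ℝ), m (Ioi K) = 0 →
      ∀ᵐ u ∂((m.withDensity (fun y => (w y : ℝ≥0∞))).map Real.exp), u ∈ Icc (0:ℝ) M := by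
    intro m hm
    rw [ae_iff]
    have hset : {a : ℝ | a ∉ Icc (0:ℝ) M} = (Icc (0:ℝ) M)ᶜ := rfl
    rw [hset]
    rw [Measure.map_apply Real.measurable_exp
      ((measurableSet_Icc (a := (0:ℝ)) (b := M)).compl)]
    apply measure_mono_null (t := Ioi K)
    · intro y hy
      simp only [mem_preimage, mem_compl_iff, mem_Icc, not_and_or, not_le] at hy
      rcases hy with h1 | h2
      · exact absurd (Real.exp_pos y).le (not_le.2 h1)
      · exact mem_Ioi.2 (Real.exp_lt_exp.mp h2)
    · rw [withDensity_apply _ measurableSet_Ioi]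
      rw [Measure.restrict_eq_zero.2 hm]
      simp
  have haeP : ∀ᵐ u ∂P, u ∈ Icc (0:ℝ) M := hsupp μ hμK
  have haeQ : ∀ᵐ u ∂Q, u ∈ Icc (0:ℝ) M := hsupp ν hνK
  -- moments agree
  have hmom : ∀ n : ℕ, ∫ u, u^n ∂P = ∫ u, u^n ∂Q := by
    intro n
    have e1 : ∀ (m : Measure ℝ),
        ∫ u, u^n ∂((m.withDensity (fun y => (w y : ℝ≥0∞))).map Real.exp)
          = ∫ y, Real.exp (A*y^2 + n*y) ∂m := by
      intro m
      rw [integral_map Real.measurable_exp.aemeasurable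
        (continuous_pow n).aestronglyMeasurable]
      rw [hconv m (fun y => (Real.exp y)^n)]
      congr 1
      ext y
      rw [← Real.exp_nat_mul, ← Real.exp_add]
    rw [hP, hQ, hρμ, hρν, e1, e1]
    exact h n
  -- integrability of ae-bounded measurable functions
  have hintb : ∀ (m : Measure ℝ) [IsFiniteMeasure m], (∀ᵐ u ∂m, u ∈ Icc (0:ℝ) M) →
      ∀ g : ℝ → ℝ, Continuous g → Integrable g m := by
    intro m hfin hae g hg
    obtain ⟨C, hC⟩ := (isCompact_Icc (a := (0:ℝ)) (b := M)).exists_bound_of_continuousOn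
      hg.continuousOn
    refine Integrable.mono' (integrable_const C) hg.aestronglyMeasurable ?_
    filter_upwards [hae] with u hu
    exact hC u hu
  -- polynomial integrals agree
  have hpoly : ∀ q : Polynomial ℝ, ∫ u, q.eval u ∂P = ∫ u, q.eval u ∂Q := by
    intro q
    induction q using Polynomial.induction_on with
    | C a =>
      simp only [Polynomial.eval_C]
      rw [integral_const, integral_const]
      have h0 := hmom 0
      simp only [pow_zero] at h0
      rw [integral_const, integral_const] at h0
      simp only [smul_eq_mul, mul_one] at h0
      rw [smul_eq_mul, smul_eq_mul, h0]
    | add p q hp hq =>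
      simp only [Polynomial.eval_add]
      rw [integral_add (hintb P haeP _ p.continuous) (hintb P haeP _ q.continuous),
        integral_add (hintb Q haeQ _ p.continuous) (hintb Q haeQ _ q.continuous), hp, hq]
    | monomial n a _ =>
      simp only [Polynomial.eval_mul, Polynomial.eval_C, Polynomial.eval_pow,
        Polynomial.eval_X]
      rw [integral_const_mul, integral_const_mul, hmom (n+1)]
  -- bounded continuous functions integrate equally
  have hcont : ∀ g : ℝ → ℝ, Continuous g →
      ∫ u, g u ∂P = ∫ u, g u ∂Q := by
    intro g hg
    have hintP : Integrable g P := hintb P haeP g hg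
    have hintQ : Integrable g Q := hintb Q haeQ g hg
    have key : ∀ ε > (0:ℝ), |∫ u, g u ∂P - ∫ u, g u ∂Q| ≤
        ε * ((P univ).toReal + (Q univ).toReal) := by
      intro ε hε
      obtain ⟨p, hp⟩ := exists_polynomial_near_of_continuousOn 0 M g hg.continuousOn ε hε
      have hintpP : Integrable (fun u => p.eval u) P := hintb P haeP _ p.continuous
      have hintpQ : Integrable (fun u => p.eval u) Q := hintb Q haeQ _ p.continuous
      have hd : ∀ (m : Measure ℝ) [IsFiniteMeasure m], (∀ᵐ u ∂m, u ∈ Icc (0:ℝ) M) →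
          Integrable g m → Integrable (fun u => p.eval u) m →
          |∫ u, g u ∂m - ∫ u, p.eval u ∂m| ≤ ε * (m univ).toReal := by
        intro m hfin hae h1 h2
        rw [← integral_sub h1 h2]
        have := norm_integral_le_of_norm_le_const (μ := m)
          (f := fun u => g u - p.eval u) (C := ε) ?_
        · simpa [measureReal_def] using this
        · filter_upwards [hae] with u hu
          rw [Real.norm_eq_abs, abs_sub_comm]
          exact (hp u hu).le
      have h1 := hd P haeP hintP hintpP
      have h2 := hd Q haeQ hintQ hintpQ
      have h3 := hpoly p
      calc |∫ u, g u ∂P - ∫ u, g u ∂Q|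
          = |(∫ u, g u ∂P - ∫ u, p.eval u ∂P) - (∫ u, g u ∂Q - ∫ u, p.eval u ∂Q)| := by
            rw [h3]; ring_nf
        _ ≤ |∫ u, g u ∂P - ∫ u, p.eval u ∂P| + |∫ u, g u ∂Q - ∫ u, p.eval u ∂Q| :=
            abs_sub _ _
        _ ≤ ε * (P univ).toReal + ε * (Q univ).toReal := add_le_add h1 h2
        _ = ε * ((P univ).toReal + (Q univ).toReal) := by ring
    have habs : |∫ u, g u ∂P - ∫ u, g u ∂Q| ≤ 0 := by
      by_contra hcon
      push_neg at hcon
      set D := |∫ u, g u ∂P - ∫ u, g u ∂Q| with hD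
      have hmass : (0:ℝ) ≤ (P univ).toReal + (Q univ).toReal := by positivity
      have := key (D / ((P univ).toReal + (Q univ).toReal + 1) / 2)
        (by positivity)
      have hlt : D / ((P univ).toReal + (Q univ).toReal + 1) / 2 *
          ((P univ).toReal + (Q univ).toReal) < D := by
        rw [div_div]
        rw [div_mul_eq_mul_div, div_lt_iff₀ (by positivity)]
        nlinarith
      linarith
    have := abs_nonneg (∫ u, g u ∂P - ∫ u, g u ∂Q)
    have : |∫ u, g u ∂P - ∫ u, g u ∂Q| = 0 := le_antisymm habs this
    have := abs_eq_zero.mp this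
    linarith
  -- P = Q
  have hPQ : P = Q := by
    refine ext_of_forall_lintegral_eq_of_IsFiniteMeasure ?_
    intro f
    have hgc : Continuous fun x => ((f x : ℝ≥0) : ℝ) :=
      NNReal.continuous_coe.comp f.continuous
    have hintP : Integrable (fun x => ((f x : ℝ≥0) : ℝ)) P := hintb P haeP _ hgc
    have hintQ : Integrable (fun x => ((f x : ℝ≥0) : ℝ)) Q := hintb Q haeQ _ hgc
    rw [lintegral_coe_eq_integral _ hintP, lintegral_coe_eq_integral _ hintQ,
      hcont _ hgc]
  -- pull back along exp
  have hemb : MeasurableEmbedding Real.exp :=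
    Real.measurable_exp.measurableEmbedding Real.exp_injective
  have hρ : ρμ = ρν := by
    ext s hs
    have himg : MeasurableSet (Real.exp '' s) := hemb.measurableSet_image.2 hs
    have e1 : ∀ (ρ : Measure ℝ), (ρ.map Real.exp) (Real.exp '' s) = ρ s := by
      intro ρ
      rw [Measure.map_apply Real.measurable_exp himg,
        preimage_image_eq s Real.exp_injective]
    have := congrArg (fun m => m (Real.exp '' s)) hPQ
    simpa [hP, hQ, e1] using this
  -- remove density
  have hne0 : ∀ᵐ y ∂μ, (fun y => (w y : ℝ≥0∞)) y ≠ 0 := by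
    filter_upwards with y
    simp only [ne_eq, ENNReal.coe_eq_zero]
    rw [hw]
    simp only [Real.toNNReal_eq_zero, not_le]
    exact Real.exp_pos _
  have hne0' : ∀ᵐ y ∂ν, (fun y => (w y : ℝ≥0∞)) y ≠ 0 := by
    filter_upwards with y
    simp only [ne_eq, ENNReal.coe_eq_zero]
    rw [hw]
    simp only [Real.toNNReal_eq_zero, not_le]
    exact Real.exp_pos _
  have hnetop : ∀ᵐ y ∂μ, (fun y => (w y : ℝ≥0∞)) y ≠ ⊤ := by
    filter_upwards with y; exact ENNReal.coe_ne_top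
  have hnetop' : ∀ᵐ y ∂ν, (fun y => (w y : ℝ≥0∞)) y ≠ ⊤ := by
    filter_upwards with y; exact ENNReal.coe_ne_top
  calc μ = (μ.withDensity (fun y => (w y : ℝ≥0∞))).withDensity
        (fun y => ((w y : ℝ≥0∞))⁻¹) := (withDensity_inv_same hwEmeas hne0 hnetop).symm
    _ = (ν.withDensity (fun y => (w y : ℝ≥0∞))).withDensity
        (fun y => ((w y : ℝ≥0∞))⁻¹) := by rw [← hρμ, ← hρν, hρ]
    _ = ν := withDensity_inv_same hwEmeas hne0' hnetop'

end auxiliary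

/-- If the image under `T` of a finite signed Borel measure
concentrated on `(-∞,K]` vanishes on some nonempty open subset of
`Ω = (0,T) × (-∞,K]`, then the measure is zero; in particular `T` is injective. -/
theorem Tsigned_eq_zero_of_vanishing_on_open
    (r σ T x0 K : ℝ) (hr : 0 ≤ r) (hσ : 0 < σ) (hT : 0 < T) (hK : K < x0)
    (s : SignedMeasure ℝ) (hconc : s.totalVariation (Set.Ioi K) = 0)
    (V : Set (ℝ × ℝ)) (hVopen : IsOpen V) (hVne : V.Nonempty)
    (hVsub : V ⊆ Set.Ioo (0 : ℝ) T ×ˢ Set.Iic K)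
    (hvanish : ∀ p ∈ V, Tsigned r σ x0 T s p.1 p.2 = 0) :
    s = 0 := by
  set pos := s.toJordanDecomposition.posPart with hpos
  set neg := s.toJordanDecomposition.negPart with hneg
  have hK2 : pos (Ioi K) = 0 ∧ neg (Ioi K) = 0 := by
    rw [SignedMeasure.totalVariation, Measure.add_apply] at hconc
    exact add_eq_zero.mp hconc
  obtain ⟨⟨t0, x1⟩, hp0V⟩ := hVne
  obtain ⟨ε, hε, hball⟩ := Metric.isOpen_iff.mp hVopen (t0, x1) hp0V
  have hmem : ∀ x ∈ Metric.ball x1 ε, (t0, x) ∈ V := by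
    intro x hx
    apply hball
    rw [← ball_prod_same]
    exact ⟨mem_ball_self hε, hx⟩
  have ht0 : t0 ∈ Ioo (0:ℝ) T := (hVsub hp0V).1
  have hs1 : (0:ℝ) < σ^2*(T-t0) := by
    have := pow_pos hσ 2
    have := ht0.2
    nlinarith
  have hs0 : (0:ℝ) < σ^2*T := by have := pow_pos hσ 2; nlinarith
  set A : ℝ := (2*(σ^2*T))⁻¹ - (2*(σ^2*(T-t0)))⁻¹ with hA_def
  have hA : A < 0 := by
    rw [hA_def, sub_neg]
    apply inv_strictAnti₀ (by linarith)
    have := ht0.1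
    nlinarith
  set B : ℝ → ℝ := fun x =>
    (x + (-r-σ^2/2)*(T-t0))/(σ^2*(T-t0)) - (x0 + (-r-σ^2/2)*T)/(σ^2*T) with hB_def
  have hBall : ∀ x ∈ Metric.ball x1 ε,
      ∫ y, Real.exp (A*y^2 + B x*y) ∂pos = ∫ y, Real.exp (A*y^2 + B x*y) ∂neg := by
    intro x hx
    obtain ⟨c, hc, hck⟩ := kappa_eq r σ x0 T t0 x hσ ht0.1 ht0.2
    have h0 := hvanish (t0, x) (hmem x hx)
    rw [Tsigned, sub_eq_zero] at h0
    have e : ∀ m : Measure ℝ, ∫ y, kappa r σ x0 T t0 x y ∂m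
        = c * ∫ y, Real.exp (A*y^2 + B x*y) ∂m := by
      intro m
      rw [← integral_const_mul]
      apply integral_congr_ae
      filter_upwards with y
      rw [hck y]
    rw [e pos, e neg] at h0
    exact mul_left_cancel₀ (ne_of_gt hc) h0
  set δ : ℝ := ε / (σ^2*(T-t0)) with hδ_def
  have hδ : 0 < δ := div_pos hε hs1
  have hIoo : ∀ β ∈ Ioo (B x1 - δ) (B x1 + δ),
      ∫ y, Real.exp (A*y^2+β*y) ∂pos = ∫ y, Real.exp (A*y^2+β*y) ∂neg := by
    intro β hβ
    set x : ℝ := x1 + (β - B x1)*(σ^2*(T-t0)) with hx_def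
    have hBx : B x = β := by
      have hne1 := hs1.ne'
      have hne0 := hs0.ne'
      have haff : B x - B x1 = (x - x1)/(σ^2*(T-t0)) := by
        rw [hB_def]
        field_simp
        ring
      have hxx : x - x1 = (β - B x1)*(σ^2*(T-t0)) := by rw [hx_def]; ring
      rw [hxx, mul_div_assoc, div_self hne1, mul_one] at haff
      linarith
    have hxball : x ∈ Metric.ball x1 ε := by
      rw [Metric.mem_ball, Real.dist_eq, hx_def]
      have h1 : |β - B x1| < δ := by
        rw [abs_lt]
        constructor <;> [linarith [hβ.1]; linarith [hβ.2]]
      have : |x1 + (β - B x1) * (σ ^ 2 * (T - t0)) - x1| = |β - B x1| * (σ^2*(T-t0)) := by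
        rw [show x1 + (β - B x1) * (σ ^ 2 * (T - t0)) - x1 = (β - B x1) * (σ ^ 2 * (T - t0)) by ring]
        rw [abs_mul, abs_of_pos hs1]
      rw [this]
      calc |β - B x1| * (σ^2*(T-t0)) < δ * (σ^2*(T-t0)) := by
            exact mul_lt_mul_of_pos_right h1 hs1
        _ = ε := by rw [hδ_def]; field_simp; exact div_self (sub_pos.2 ht0.2).ne'
    have := hBall x hxball
    rwa [hBx] at this
  have hall := laplace_all A hA pos neg (B x1) δ hδ hIoo
  have hpn : pos = neg := measure_eq_of_laplace A K hA pos neg hK2.1 hK2.2 hall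
  -- mutual singularity forces both to vanish
  have hms := s.toJordanDecomposition.mutuallySingular
  obtain ⟨u, hu, h1, h2⟩ := hms
  have hpos0 : pos = 0 := by
    have : pos univ = 0 := by
      rw [← measure_add_measure_compl hu]
      rw [← hpos] at h1
      rw [← hneg] at h2
      rw [h1, zero_add, hpn]
      exact h2
    exact Measure.measure_univ_eq_zero.mp this
  have hneg0 : neg = 0 := by rw [← hpn]; exact hpos0
  have hsj : s.toJordanDecomposition.toSignedMeasure = s :=
    s.toSignedMeasure_toJordanDecomposition
  apply VectorMeasure.ext
  intro i hi
  rw [← hsj, JordanDecomposition.toSignedMeasure, VectorMeasure.sub_apply,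
    Measure.toSignedMeasure_apply_measurable hi, Measure.toSignedMeasure_apply_measurable hi]
  have hzp : s.toJordanDecomposition.posPart i = 0 := by rw [← hpos, hpos0]; simp
  have hzn : s.toJordanDecomposition.negPart i = 0 := by rw [← hneg, hneg0]; simp
  rw [measureReal_def, measureReal_def, hzp, hzn]
  simp
end

section
/- Let V be a locally convex topological vector space over ℝ, let f : V → (-∞, ∞] be a convex function, and let x0 ∈ V. If there exists an open neighbourhood O of x0 such that sup_{x ∈ O} f(x) < ∞, then f is continuous at x0. -/
open Filter Set
open Topology

/-- A convex function `f : V → (-∞,∞]` on a locally convex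
topological vector space which is bounded above on some open neighbourhood of a
point `x0` is continuous at `x0`. -/
theorem convex_continuousAt_of_bddAbove_nhds
    {V : Type*} [AddCommGroup V] [Module ℝ V] [TopologicalSpace V]
    [IsTopologicalAddGroup V] [ContinuousSMul ℝ V] [LocallyConvexSpace ℝ V]
    (f : V → EReal) (hne : ∀ x, f x ≠ ⊥)
    (hconv : ∀ x y : V, ∀ a b : ℝ, 0 ≤ a → 0 ≤ b → a + b = 1 →
      f (a • x + b • y) ≤ (a : EReal) * f x + (b : EReal) * f y)
    (x0 : V) (O : Set V) (hO : IsOpen O) (hx0 : x0 ∈ O)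
    (M : ℝ) (hM : ∀ x ∈ O, f x ≤ (M : EReal)) :
    ContinuousAt f x0 := by
  classical
  have hfx0M : f x0 ≤ (M : EReal) := hM x0 hx0
  have hx0t : f x0 ≠ ⊤ := (hfx0M.trans_lt (EReal.coe_lt_top M)).ne
  set r : ℝ := (f x0).toReal with hrdef
  have h0 : f x0 = (r : EReal) := (EReal.coe_toReal hx0t (hne x0)).symm
  have hrM : r ≤ M := by
    rw [h0] at hfx0M; exact_mod_cast hfx0M
  set K : ℝ := M - r with hKdef
  have hK : 0 ≤ K := by linarith
  -- symmetric neighbourhood of 0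
  set U : Set V := ((fun v => x0 + v) ⁻¹' O) ∩ ((fun v => x0 - v) ⁻¹' O) with hUdef
  have hUopen : IsOpen U :=
    (hO.preimage (continuous_const.add continuous_id)).inter
      (hO.preimage (continuous_const.sub continuous_id))
  have hU0 : (0 : V) ∈ U := by
    constructor <;> simp [hx0]
  have hU : U ∈ 𝓝 (0 : V) := hUopen.mem_nhds hU0
  have hUneg : ∀ u ∈ U, -u ∈ U := by
    intro u hu
    refine ⟨?_, ?_⟩
    · simpa [sub_eq_add_neg] using hu.2
    · simpa [sub_neg_eq_add] using hu.1
  -- upper bound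
  have upper : ∀ t : ℝ, 0 ≤ t → t ≤ 1 → ∀ u ∈ U,
      f (x0 + t • u) ≤ ((r + t * K : ℝ) : EReal) := by
    intro t ht0 ht1 u hu
    have huO : x0 + u ∈ O := hu.1
    have h1 := hconv x0 (x0 + u) (1 - t) t (by linarith) ht0 (by ring)
    have harg : (1 - t) • x0 + t • (x0 + u) = x0 + t • u := by module
    rw [harg, h0] at h1
    have h2 : (t : EReal) * f (x0 + u) ≤ (t : EReal) * (M : EReal) :=
      mul_le_mul_of_nonneg_left (hM _ huO) (by exact_mod_cast ht0)
    calc f (x0 + t • u) ≤ ((1 - t : ℝ) : EReal) * (r : EReal) + (t : EReal) * f (x0 + u) := h1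
      _ ≤ ((1 - t : ℝ) : EReal) * (r : EReal) + (t : EReal) * (M : EReal) :=
          add_le_add_right h2 _
      _ = (((1 - t) * r + t * M : ℝ) : EReal) := by norm_cast
      _ = ((r + t * K : ℝ) : EReal) := by norm_cast; rw [hKdef]; ring
  -- two-sided bound
  have key : ∀ t : ℝ, 0 < t → t ≤ 1 → ∀ u ∈ U, ∃ a : ℝ,
      f (x0 + t • u) = (a : EReal) ∧ r - t * K ≤ a ∧ a ≤ r + t * K := by
    intro t ht0 ht1 u hu
    have hu' : -u ∈ U := hUneg u hu
    have hy := upper t ht0.le ht1 u hu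
    have hz := upper t ht0.le ht1 (-u) hu'
    have hyt : f (x0 + t • u) ≠ ⊤ := (hy.trans_lt (EReal.coe_lt_top _)).ne
    set a : ℝ := (f (x0 + t • u)).toReal with hadef
    have hya : f (x0 + t • u) = (a : EReal) := (EReal.coe_toReal hyt (hne _)).symm
    have hzt : f (x0 + t • (-u)) ≠ ⊤ := (hz.trans_lt (EReal.coe_lt_top _)).ne
    set c : ℝ := (f (x0 + t • (-u))).toReal with hcdef
    have hzc : f (x0 + t • (-u)) = (c : EReal) := (EReal.coe_toReal hzt (hne _)).symm
    have hmid := hconv (x0 + t • u) (x0 + t • (-u)) (1/2) (1/2) (by norm_num) (by norm_num)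
      (by norm_num)
    have harg : (1/2 : ℝ) • (x0 + t • u) + (1/2 : ℝ) • (x0 + t • (-u)) = x0 := by module
    rw [harg, h0, hya, hzc] at hmid
    have hmid' : r ≤ (1/2) * a + (1/2) * c := by exact_mod_cast hmid
    have ha2 : a ≤ r + t * K := by rw [hya] at hy; exact_mod_cast hy
    have hc2 : c ≤ r + t * K := by rw [hzc] at hz; exact_mod_cast hz
    exact ⟨a, hya, by linarith, ha2⟩
  -- image neighbourhoods
  have nhds_img : ∀ t : ℝ, 0 < t → (fun u : V => x0 + t • u) '' U ∈ 𝓝 x0 := by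
    intro t ht
    let e : V ≃ₜ V := (Homeomorph.smulOfNeZero (t : ℝ) ht.ne').trans (Homeomorph.addLeft x0)
    have hee : ⇑e = fun u : V => x0 + t • u := by
      ext u; simp [e, Homeomorph.smulOfNeZero]
    have h1 : e '' U ∈ map e (𝓝 0) := image_mem_map hU
    rw [e.map_nhds_eq] at h1
    have he0 : e 0 = x0 := by rw [hee]; simp
    rw [he0, hee] at h1
    exact h1
  -- conclude
  rw [ContinuousAt, h0, tendsto_order]
  constructor
  · intro b hb
    obtain ⟨c, hbc, hcr⟩ := exists_between hb
    have hct : c ≠ ⊤ := (hcr.trans (EReal.coe_lt_top r)).ne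
    have hcb : c ≠ ⊥ := by
      intro h; rw [h] at hbc; exact (not_lt_bot hbc)
    set c' : ℝ := c.toReal with hc'def
    have hcc : c = (c' : EReal) := (EReal.coe_toReal hct hcb).symm
    have hc'r : c' < r := by rw [hcc] at hcr; exact_mod_cast hcr
    set t : ℝ := min 1 ((r - c') / (2 * (K + 1))) with htdef
    have hKp : (0:ℝ) < 2 * (K + 1) := by linarith
    have ht0 : 0 < t := lt_min one_pos (div_pos (by linarith) hKp)
    have ht1 : t ≤ 1 := min_le_left _ _
    have htK : t * K < r - c' := by
      have h1 : t ≤ (r - c') / (2 * (K + 1)) := min_le_right _ _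
      have h2 : t * K ≤ (r - c') / (2 * (K + 1)) * K :=
        mul_le_mul_of_nonneg_right h1 hK
      rw [div_mul_eq_mul_div] at h2
      have h3 : (r - c') * K / (2 * (K + 1)) < r - c' := by
        rw [div_lt_iff₀ hKp]; nlinarith
      exact h2.trans_lt h3
    filter_upwards [nhds_img t ht0] with x hx
    obtain ⟨u, hu, rfl⟩ := hx
    obtain ⟨a, hfa, h1, h2⟩ := key t ht0 ht1 u hu
    rw [hfa]
    calc b < c := hbc
      _ = (c' : EReal) := hcc
      _ ≤ (a : EReal) := by exact_mod_cast (by linarith : c' ≤ a)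
  · intro b hb
    obtain ⟨c, hrc, hcb⟩ := exists_between hb
    have hct : c ≠ ⊤ := hcb.ne_top
    have hcbot : c ≠ ⊥ := by
      intro h; rw [h] at hrc; exact (not_lt_bot hrc)
    set c' : ℝ := c.toReal with hc'def
    have hcc : c = (c' : EReal) := (EReal.coe_toReal hct hcbot).symm
    have hrc' : r < c' := by rw [hcc] at hrc; exact_mod_cast hrc
    set t : ℝ := min 1 ((c' - r) / (2 * (K + 1))) with htdef
    have hKp : (0:ℝ) < 2 * (K + 1) := by linarith
    have ht0 : 0 < t := lt_min one_pos (div_pos (by linarith) hKp)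
    have ht1 : t ≤ 1 := min_le_left _ _
    have htK : t * K < c' - r := by
      have h1 : t ≤ (c' - r) / (2 * (K + 1)) := min_le_right _ _
      have h2 : t * K ≤ (c' - r) / (2 * (K + 1)) * K :=
        mul_le_mul_of_nonneg_right h1 hK
      rw [div_mul_eq_mul_div] at h2
      have h3 : (c' - r) * K / (2 * (K + 1)) < c' - r := by
        rw [div_lt_iff₀ hKp]; nlinarith
      exact h2.trans_lt h3
    filter_upwards [nhds_img t ht0] with x hx
    obtain ⟨u, hu, rfl⟩ := hx
    obtain ⟨a, hfa, h1, h2⟩ := key t ht0 ht1 u hu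
    rw [hfa]
    calc (a : EReal) ≤ (c' : EReal) := by exact_mod_cast (by linarith : a ≤ c')
      _ = c := hcc.symm
      _ < b := hcb
end

section
/- Let X and Y be real Gaussian random variables with X ~ N(μ_X, σ²) and Y ~ N(μ_Y, σ²) for the same variance σ² > 0 and means μ_X ≤ μ_Y. Then the conditional law of X given X ≥ 0 is dominated by the conditional law of Y given Y ≥ 0 in the usual stochastic order: P(X > a | X ≥ 0) ≤ P(Y > a | Y ≥ 0) for every a ∈ ℝ. -/
open MeasureTheory ProbabilityTheory Set
open scoped ENNReal NNReal

/-- Pointwise likelihood ratio inequality for Gaussian densities with equal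
variance: if `mX ≤ mY` and `y ≤ x` then
`pdf mX x * pdf mY y ≤ pdf mY x * pdf mX y`. -/
lemma gaussianPDF_mul_le {mX mY : ℝ} (v : ℝ≥0) (hv : v ≠ 0) (hm : mX ≤ mY)
    {x y : ℝ} (hxy : y ≤ x) :
    gaussianPDF mX v x * gaussianPDF mY v y ≤ gaussianPDF mY v x * gaussianPDF mX v y := by
  have hvpos : (0:ℝ) < v := by positivity
  simp only [gaussianPDF, gaussianPDFReal]
  rw [← ENNReal.ofReal_mul (by positivity), ← ENNReal.ofReal_mul (by positivity)]
  apply ENNReal.ofReal_le_ofReal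
  have hc : (0:ℝ) ≤ (Real.sqrt (2 * Real.pi * v))⁻¹ := by positivity
  rw [show ∀ c e1 e2 : ℝ, c * e1 * (c * e2) = c * c * (e1 * e2) by intros; ring,
    show ∀ c e1 e2 : ℝ, c * e1 * (c * e2) = c * c * (e1 * e2) by intros; ring]
  apply mul_le_mul_of_nonneg_left _ (by positivity)
  rw [← Real.exp_add, ← Real.exp_add, Real.exp_le_exp, ← add_div, ← add_div]
  have h2v : (0:ℝ) < 2 * v := by positivity
  apply div_le_div_of_nonneg_right ?_ h2v.le
  nlinarith [mul_nonneg (sub_nonneg.2 hm) (sub_nonneg.2 hxy)]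

/-- Product comparison: if every point of `s` dominates every point of `t`,
then the likelihood-ratio ordering gives a product inequality. -/
lemma gaussian_measure_prod_le {mX mY : ℝ} {v : ℝ≥0} (hv : v ≠ 0) (hm : mX ≤ mY)
    {s t : Set ℝ} (hs : MeasurableSet s) (ht : MeasurableSet t)
    (hst : ∀ x ∈ s, ∀ y ∈ t, y ≤ x) :
    gaussianReal mX v s * gaussianReal mY v t ≤ gaussianReal mY v s * gaussianReal mX v t := by
  rw [gaussianReal_apply _ hv, gaussianReal_apply _ hv, gaussianReal_apply _ hv,
    gaussianReal_apply _ hv, ← lintegral_indicator hs, ← lintegral_indicator ht,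
    ← lintegral_indicator hs, ← lintegral_indicator ht,
    ← lintegral_prod_mul (((measurable_gaussianPDF mX v).indicator hs).aemeasurable)
      (((measurable_gaussianPDF mY v).indicator ht).aemeasurable),
    ← lintegral_prod_mul (((measurable_gaussianPDF mY v).indicator hs).aemeasurable)
      (((measurable_gaussianPDF mX v).indicator ht).aemeasurable)]
  refine lintegral_mono fun z => ?_
  rcases em (z.1 ∈ s) with h1 | h1
  · rcases em (z.2 ∈ t) with h2 | h2
    · simp only [Set.indicator_of_mem h1, Set.indicator_of_mem h2]
      exact gaussianPDF_mul_le v hv hm (hst _ h1 _ h2)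
    · simp [Set.indicator_of_notMem h2]
  · simp [Set.indicator_of_notMem h1]

/-- If `X ~ N(mX, v)` and `Y ~ N(mY, v)` with the same
positive variance `v` and `mX ≤ mY`, then the law of `X` conditioned on
`X ≥ 0` is dominated in the usual stochastic order by the law of `Y`
conditioned on `Y ≥ 0`. -/
theorem gaussian_conditional_stochastic_order
    {Ω : Type*} [MeasurableSpace Ω] (P : Measure Ω) [IsProbabilityMeasure P]
    (X Y : Ω → ℝ) (mX mY : ℝ) (v : ℝ≥0) (hv : v ≠ 0) (hm : mX ≤ mY)
    (hX : P.map X = gaussianReal mX v)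
    (hY : P.map Y = gaussianReal mY v)
    (a : ℝ) :
    P {ω | a < X ω ∧ 0 ≤ X ω} / P {ω | 0 ≤ X ω} ≤
      P {ω | a < Y ω ∧ 0 ≤ Y ω} / P {ω | 0 ≤ Y ω} := by
  -- measurability of X and Y
  have hXm : AEMeasurable X P := by
    by_contra h
    rw [Measure.map_of_not_aemeasurable h] at hX
    have := congrArg (fun μ : Measure ℝ => μ Set.univ) hX
    simp at this
  have hYm : AEMeasurable Y P := by
    by_contra h
    rw [Measure.map_of_not_aemeasurable h] at hY
    have := congrArg (fun μ : Measure ℝ => μ Set.univ) hY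
    simp at this
  have hSm : MeasurableSet {x : ℝ | a < x ∧ 0 ≤ x} := by
    have : {x : ℝ | a < x ∧ 0 ≤ x} = Ioi a ∩ Ici 0 := by ext x; simp [mem_Ioi, mem_Ici]
    rw [this]; exact measurableSet_Ioi.inter measurableSet_Ici
  have e1 : P {ω | a < X ω ∧ 0 ≤ X ω} = gaussianReal mX v {x | a < x ∧ 0 ≤ x} := by
    rw [← hX, Measure.map_apply_of_aemeasurable hXm hSm]; rfl
  have e2 : P {ω | 0 ≤ X ω} = gaussianReal mX v (Ici 0) := by
    rw [← hX, Measure.map_apply_of_aemeasurable hXm measurableSet_Ici]; rfl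
  have e3 : P {ω | a < Y ω ∧ 0 ≤ Y ω} = gaussianReal mY v {x | a < x ∧ 0 ≤ x} := by
    rw [← hY, Measure.map_apply_of_aemeasurable hYm hSm]; rfl
  have e4 : P {ω | 0 ≤ Y ω} = gaussianReal mY v (Ici 0) := by
    rw [← hY, Measure.map_apply_of_aemeasurable hYm measurableSet_Ici]; rfl
  rw [e1, e2, e3, e4]
  have hpos : ∀ m : ℝ, 0 < gaussianReal m v (Ici 0) := by
    intro m
    rw [gaussianReal_apply _ hv, setLIntegral_pos_iff (measurable_gaussianPDF _ _)]
    have hsupp : Function.support (gaussianPDF m v) = Set.univ := by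
      ext x; simp [Function.mem_support, (gaussianPDF_pos m hv x).ne']
    rw [hsupp, Set.univ_inter, Real.volume_Ici]
    simp
  rcases lt_or_ge a 0 with ha | ha
  · -- a < 0 : both conditional probabilities are 1
    have hset : {x : ℝ | a < x ∧ 0 ≤ x} = Ici 0 := by
      ext x; simp only [mem_setOf_eq, mem_Ici]
      exact ⟨fun h => h.2, fun h => ⟨lt_of_lt_of_le ha h, h⟩⟩
    rw [hset, ENNReal.div_self (hpos mX).ne' (measure_ne_top _ _),
      ENNReal.div_self (hpos mY).ne' (measure_ne_top _ _)]
  · -- a ≥ 0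
    have hset : {x : ℝ | a < x ∧ 0 ≤ x} = Ioi a := by
      ext x; simp only [mem_setOf_eq, mem_Ioi]
      exact ⟨fun h => h.1, fun h => ⟨h, le_trans ha h.le⟩⟩
    rw [hset]
    set A := gaussianReal mX v (Ioi a) with hA
    set B := gaussianReal mX v (Ici 0) with hB
    set C := gaussianReal mY v (Ioi a) with hC
    set D := gaussianReal mY v (Ici 0) with hD
    have hsplit : ∀ m : ℝ, gaussianReal m v (Ici 0)
        = gaussianReal m v (Icc 0 a) + gaussianReal m v (Ioi a) := by
      intro m
      rw [← measure_union ?_ measurableSet_Ioi, Icc_union_Ioi_eq_Ici ha]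
      exact Set.disjoint_left.2 fun x hx hx' => absurd hx.2 (not_le.2 hx')
    have key : A * D ≤ C * B := by
      calc A * D = A * gaussianReal mY v (Icc 0 a) + A * gaussianReal mY v (Ioi a) := by
            rw [hD, hsplit, mul_add]
        _ ≤ C * gaussianReal mX v (Icc 0 a) + C * gaussianReal mX v (Ioi a) := by
            refine add_le_add ?_ (le_of_eq (mul_comm _ _))
            exact gaussian_measure_prod_le hv hm measurableSet_Ioi measurableSet_Icc
              (fun x hx y hy => le_trans hy.2 (le_of_lt hx))
        _ = C * B := by rw [hB, hsplit, mul_add]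
    rw [ENNReal.le_div_iff_mul_le (Or.inl (hpos mY).ne') (Or.inl (measure_ne_top _ _))]
    calc A / B * D = A * D / B := by
          rw [div_eq_mul_inv, div_eq_mul_inv, mul_right_comm]
      _ ≤ C * B / B := ENNReal.div_le_div_right key B
      _ = C * (B / B) := by rw [mul_div_assoc]
      _ = C := by rw [ENNReal.div_self (hpos mX).ne' (measure_ne_top _ _), mul_one]
end

section
/- Let μ be a finite nonnegative Borel measure on ℝ, T > 0, σ > 0, r ≥ 0, r̂ := r - σ²/2, x0 ∈ ℝ, and define Ψ(θ,x) := e^{-rθ} ∫ [N(x + r̂θ, σ²θ, y) / N(x0 + r̂T, σ²T, y)] μ(dy). Then Ψ is well defined on (0,T)×ℝ and satisfies the Black-Scholes partial differential equation D₁Ψ(θ,x) = (σ²/2)·D₂₂Ψ(θ,x) + (r - σ²/2)·D₂Ψ(θ,x) - r·Ψ(θ,x) for all (θ,x) ∈ (0,T)×ℝ, where D₁ denotes the partial derivative in θ and D₂, D₂₂ the first and second partial derivatives in x. -/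
open MeasureTheory Filter Set
open scoped ENNReal

/-- The generalised European value function `Ψ`. -/
noncomputable def Psi (r σ x0 T : ℝ) (μ : Measure ℝ) (θ x : ℝ) : ℝ :=
  Real.exp (-(r * θ)) * ∫ y, kern r σ x0 T θ x y ∂μ


open Metric

noncomputable def Kf (a rh T x0 t x y : ℝ) : ℝ :=
  Real.sqrt T * Real.exp (-(Real.log t) / 2
    - (y - (x + rh * t)) ^ 2 / (2 * a * t) + (y - (x0 + rh * T)) ^ 2 / (2 * a * T))

lemma Kf_nonneg (a rh T x0 t x y : ℝ) : 0 ≤ Kf a rh T x0 t x y :=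
  mul_nonneg (Real.sqrt_nonneg T) (Real.exp_nonneg _)

lemma continuous_Kf_y (a rh T x0 t z : ℝ) : Continuous fun y => Kf a rh T x0 t z y := by
  unfold Kf; fun_prop


lemma key_bound (c B : ℝ) (hc : 0 < c) (n : ℕ) :
    ∃ C : ℝ, 0 ≤ C ∧ ∀ u : ℝ, 0 ≤ u →
      u ^ n * Real.exp (-(c * u ^ 2) + B * u) ≤ C := by
  refine ⟨(1 + (2 * n / c) ^ n) * Real.exp (B ^ 2 / (2 * c)), by positivity, fun u hu => ?_⟩
  have h2c : (0:ℝ) < 2 * c := by linarith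
  have h1 : Real.exp (-(c * u ^ 2) + B * u)
      ≤ Real.exp (-(c / 2 * u ^ 2)) * Real.exp (B ^ 2 / (2 * c)) := by
    rw [← Real.exp_add, Real.exp_le_exp]
    have hkey : (-(c / 2 * u ^ 2) + B ^ 2 / (2 * c)) - (-(c * u ^ 2) + B * u)
        = (c * u - B) ^ 2 / (2 * c) := by field_simp; ring
    nlinarith [div_nonneg (sq_nonneg (c * u - B)) h2c.le]
  have h2 : u ^ n ≤ 1 + (u ^ 2) ^ n := by
    rcases le_total u 1 with h | h
    · have h0 : u ^ n ≤ 1 := pow_le_one₀ hu h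
      have h00 : (0:ℝ) ≤ (u ^ 2) ^ n := by positivity
      linarith
    · have h0 : u ^ n ≤ (u ^ 2) ^ n := by
        rw [← pow_mul]
        exact pow_le_pow_right₀ h (by omega)
      have : (0:ℝ) ≤ 1 := zero_le_one
      linarith
  have h3 : (u ^ 2) ^ n * Real.exp (-(c / 2 * u ^ 2)) ≤ (2 * n / c) ^ n := by
    rcases Nat.eq_zero_or_pos n with hn | hn
    · subst hn
      simp only [pow_zero, one_mul]
      exact Real.exp_le_one_iff.2 (by nlinarith [sq_nonneg u])
    · have hnn : (0:ℝ) < n := by exact_mod_cast hn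
      have hv : u ^ 2 ≤ 2 * n / c * Real.exp (c * u ^ 2 / (2 * n)) := by
        have ht : c * u ^ 2 / (2 * n) ≤ Real.exp (c * u ^ 2 / (2 * n)) :=
          (Real.add_one_le_exp _).trans' (by linarith)
        calc u ^ 2 = (2 * n / c) * (c * u ^ 2 / (2 * n)) := by field_simp
          _ ≤ (2 * n / c) * Real.exp (c * u ^ 2 / (2 * n)) := by
              apply mul_le_mul_of_nonneg_left ht (by positivity)
      have hp : (u ^ 2) ^ n ≤ (2 * n / c * Real.exp (c * u ^ 2 / (2 * n))) ^ n :=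
        pow_le_pow_left₀ (sq_nonneg u) hv n
      have he : (2 * n / c * Real.exp (c * u ^ 2 / (2 * n))) ^ n
          = (2 * n / c) ^ n * Real.exp (c / 2 * u ^ 2) := by
        rw [mul_pow, ← Real.exp_nat_mul]
        congr 1
        field_simp
      rw [he] at hp
      calc (u ^ 2) ^ n * Real.exp (-(c / 2 * u ^ 2))
          ≤ (2 * n / c) ^ n * Real.exp (c / 2 * u ^ 2) * Real.exp (-(c / 2 * u ^ 2)) := by
            apply mul_le_mul_of_nonneg_right hp (Real.exp_nonneg _)
        _ = (2 * n / c) ^ n := by rw [mul_assoc, ← Real.exp_add]; simp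
  calc u ^ n * Real.exp (-(c * u ^ 2) + B * u)
      ≤ (1 + (u ^ 2) ^ n) * (Real.exp (-(c / 2 * u ^ 2)) * Real.exp (B ^ 2 / (2 * c))) := by
        apply mul_le_mul h2 h1 (Real.exp_nonneg _) (by positivity)
    _ = (Real.exp (-(c / 2 * u ^ 2)) + (u ^ 2) ^ n * Real.exp (-(c / 2 * u ^ 2)))
          * Real.exp (B ^ 2 / (2 * c)) := by ring
    _ ≤ (1 + (2 * n / c) ^ n) * Real.exp (B ^ 2 / (2 * c)) := by
        apply mul_le_mul_of_nonneg_right _ (Real.exp_nonneg _)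
        have := Real.exp_le_one_iff.2 (show -(c / 2 * u ^ 2) ≤ 0 by nlinarith)
        linarith

lemma bound_main (a rh T x0 : ℝ) (ha : 0 < a) (hT : 0 < T) (t1 t2 X : ℝ)
    (ht1 : 0 < t1) (h12 : t1 ≤ t2) (ht2 : t2 < T) (hX : 0 ≤ X) (n : ℕ) :
    ∃ C : ℝ, 0 ≤ C ∧ ∀ t x y : ℝ, t1 ≤ t → t ≤ t2 → |x| ≤ X →
      |y - (x + rh * t)| ^ n * Kf a rh T x0 t x y ≤ C := by
  have ht2pos : 0 < t2 := lt_of_lt_of_le ht1 h12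
  set D : ℝ := X + |rh| * t2 + |x0 + rh * T| with hD
  have hDnn : 0 ≤ D := add_nonneg (add_nonneg hX (by positivity)) (abs_nonneg _)
  set c : ℝ := 1 / (2 * a * t2) - 1 / (2 * a * T) with hc
  have hcpos : 0 < c := by
    rw [hc, sub_pos]
    exact one_div_lt_one_div_of_lt (show (0:ℝ) < 2 * a * t2 by positivity) (by nlinarith)
  set B : ℝ := D / (a * T) with hB
  obtain ⟨C0, hC0, hkey⟩ := key_bound c B hcpos n
  refine ⟨Real.sqrt T * Real.exp (-(Real.log t1) / 2 + D ^ 2 / (2 * a * T)) * C0,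
    by positivity, fun t x y h1 h2 hx => ?_⟩
  have htpos : 0 < t := lt_of_lt_of_le ht1 h1
  set u : ℝ := y - (x + rh * t) with hu
  set d : ℝ := (x + rh * t) - (x0 + rh * T) with hd
  have hyd : y - (x0 + rh * T) = u + d := by rw [hu, hd]; ring
  have habsd : |d| ≤ D := by
    rw [hd, hD]
    have e1 : |x + rh * t + -(x0 + rh * T)| ≤ |x + rh * t| + |x0 + rh * T| := by
      have := abs_add_le (x + rh * t) (-(x0 + rh * T))
      rwa [abs_neg] at this
    have e2 : |x + rh * t| ≤ |x| + |rh * t| := abs_add_le x (rh * t)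
    have e3 : |rh * t| ≤ |rh| * t2 := by
      rw [abs_mul, abs_of_pos htpos]
      exact mul_le_mul_of_nonneg_left h2 (abs_nonneg rh)
    rw [sub_eq_add_neg]
    linarith
  have hud : u * d ≤ |u| * D :=
    le_trans (le_abs_self _) (by rw [abs_mul]; exact mul_le_mul_of_nonneg_left habsd (abs_nonneg u))
  have hd2 : d ^ 2 ≤ D ^ 2 := by
    have := pow_le_pow_left₀ (abs_nonneg d) habsd 2
    simpa [sq_abs] using this
  have h5 : (u + d) ^ 2 ≤ u ^ 2 + 2 * |u| * D + D ^ 2 := by nlinarith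
  have h6 : u ^ 2 / (2 * a * t2) ≤ u ^ 2 / (2 * a * t) := by
    gcongr
  have h7 : -(Real.log t) / 2 ≤ -(Real.log t1) / 2 := by
    have := Real.log_le_log ht1 h1
    linarith
  have h8 : (u + d) ^ 2 / (2 * a * T) ≤ (u ^ 2 + 2 * |u| * D + D ^ 2) / (2 * a * T) := by
    gcongr
  have hE : -(Real.log t) / 2 - u ^ 2 / (2 * a * t) + (y - (x0 + rh * T)) ^ 2 / (2 * a * T)
      ≤ (-(Real.log t1) / 2 + D ^ 2 / (2 * a * T)) + (-(c * |u| ^ 2) + B * |u|) := by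
    rw [hyd]
    have heq : -(c * |u| ^ 2) + B * |u|
        = -(u ^ 2 / (2 * a * t2)) + (u ^ 2 + 2 * |u| * D) / (2 * a * T) := by
      rw [hc, hB, sq_abs]
      field_simp
      ring
    rw [heq]
    have hsplit : (u ^ 2 + 2 * |u| * D + D ^ 2) / (2 * a * T)
        = (u ^ 2 + 2 * |u| * D) / (2 * a * T) + D ^ 2 / (2 * a * T) := by ring
    linarith [h6, h7, h8, hsplit.le]
  calc |u| ^ n * Kf a rh T x0 t x y
      = Real.sqrt T * (|u| ^ n * Real.exp (-(Real.log t) / 2 - u ^ 2 / (2 * a * t)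
          + (y - (x0 + rh * T)) ^ 2 / (2 * a * T))) := by rw [Kf]; ring
    _ ≤ Real.sqrt T * (|u| ^ n * Real.exp ((-(Real.log t1) / 2 + D ^ 2 / (2 * a * T))
          + (-(c * |u| ^ 2) + B * |u|))) := by
        apply mul_le_mul_of_nonneg_left _ (Real.sqrt_nonneg T)
        exact mul_le_mul_of_nonneg_left (Real.exp_le_exp.2 hE) (by positivity)
    _ = Real.sqrt T * Real.exp (-(Real.log t1) / 2 + D ^ 2 / (2 * a * T))
          * (|u| ^ n * Real.exp (-(c * |u| ^ 2) + B * |u|)) := by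
        rw [Real.exp_add]; ring
    _ ≤ Real.sqrt T * Real.exp (-(Real.log t1) / 2 + D ^ 2 / (2 * a * T)) * C0 := by
        exact mul_le_mul_of_nonneg_left (hkey _ (abs_nonneg u)) (by positivity)

lemma sqrt_inv_eq_exp {t : ℝ} (ht : 0 < t) : (Real.sqrt t)⁻¹ = Real.exp (-(Real.log t) / 2) := by
  rw [Real.sqrt_eq_rpow, Real.rpow_def_of_pos ht, ← Real.exp_neg]
  ring_nf


lemma kern_eq_Kf (r σ x0 T : ℝ) (hσ : 0 < σ) (hT : 0 < T) {t : ℝ} (ht : 0 < t) (x y : ℝ) :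
    kern r σ x0 T t x y = Kf (σ ^ 2) (r - σ ^ 2 / 2) T x0 t x y := by
  have hπσ : (0:ℝ) < 2 * Real.pi * σ ^ 2 := by positivity
  have hs : (0:ℝ) < Real.sqrt (2 * Real.pi * σ ^ 2) := Real.sqrt_pos.2 hπσ
  have h1 : Real.sqrt (2 * Real.pi * (σ ^ 2 * t))
      = Real.sqrt (2 * Real.pi * σ ^ 2) * Real.sqrt t := by
    rw [← Real.sqrt_mul hπσ.le]; ring_nf
  have h2 : Real.sqrt (2 * Real.pi * (σ ^ 2 * T))
      = Real.sqrt (2 * Real.pi * σ ^ 2) * Real.sqrt T := by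
    rw [← Real.sqrt_mul hπσ.le]; ring_nf
  unfold kern gauss
  rw [mul_div_mul_comm, inv_div_inv, h1, h2, mul_div_mul_left _ _ hs.ne',
    ← Real.exp_sub, div_eq_mul_inv (Real.sqrt T), mul_assoc,
    sqrt_inv_eq_exp ht, ← Real.exp_add]
  unfold Kf
  congr 2
  field_simp
  ring

lemma hasDerivAt_Kf_x (a rh T x0 t y : ℝ) (ha : 0 < a) (ht : 0 < t) (x : ℝ) :
    HasDerivAt (fun z => Kf a rh T x0 t z y)
      (Kf a rh T x0 t x y * ((y - (x + rh * t)) / (a * t))) x := by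
  have hat : (2 * a * t) ≠ 0 := by positivity
  have hin : HasDerivAt (fun z : ℝ => y - (z + rh * t)) (-1) x := by
    simpa using ((hasDerivAt_id x).add_const (rh * t)).const_sub y
  have hsq : HasDerivAt (fun z : ℝ => (y - (z + rh * t)) ^ 2)
      (2 * (y - (x + rh * t)) * (-1)) x := by
    simpa using hin.fun_pow 2
  have hq : HasDerivAt (fun z : ℝ => -(Real.log t) / 2
      - (y - (z + rh * t)) ^ 2 / (2 * a * t) + (y - (x0 + rh * T)) ^ 2 / (2 * a * T))
      (-(2 * (y - (x + rh * t)) * (-1) / (2 * a * t))) x := by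
    exact (((hsq.div_const (2 * a * t)).const_sub (-(Real.log t) / 2)).add_const _)
  have := (hq.exp).const_mul (Real.sqrt T)
  refine this.congr_deriv ?_
  unfold Kf
  field_simp

lemma hasDerivAt_Kf_xx (a rh T x0 t y : ℝ) (ha : 0 < a) (ht : 0 < t) (x : ℝ) :
    HasDerivAt (fun z => Kf a rh T x0 t z y * ((y - (z + rh * t)) / (a * t)))
      (Kf a rh T x0 t x y * (((y - (x + rh * t)) / (a * t)) ^ 2 - 1 / (a * t))) x := by
  have hin : HasDerivAt (fun z : ℝ => (y - (z + rh * t)) / (a * t)) (-1 / (a * t)) x := by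
    apply HasDerivAt.div_const
    simpa using ((hasDerivAt_id x).add_const (rh * t)).const_sub y
  have := (hasDerivAt_Kf_x a rh T x0 t y ha ht x).mul hin
  refine this.congr_deriv ?_
  have hat : (a * t) ≠ 0 := by positivity
  field_simp
  ring

lemma hasDerivAt_Kf_t (a rh T x0 x y : ℝ) (ha : 0 < a) {t : ℝ} (ht : 0 < t) :
    HasDerivAt (fun s => Kf a rh T x0 s x y)
      (Kf a rh T x0 t x y * (-(1 / (2 * t)) + rh * (y - (x + rh * t)) / (a * t)
        + (y - (x + rh * t)) ^ 2 / (2 * a * t ^ 2))) t := by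
  have hlog : HasDerivAt (fun s : ℝ => -(Real.log s) / 2) (-(t⁻¹) / 2) t :=
    ((Real.hasDerivAt_log ht.ne').neg).div_const 2
  have hin : HasDerivAt (fun s : ℝ => y - (x + rh * s)) (-rh) t := by
    simpa using (((hasDerivAt_id t).const_mul rh).const_add x).const_sub y
  have hnum : HasDerivAt (fun s : ℝ => (y - (x + rh * s)) ^ 2)
      (2 * (y - (x + rh * t)) * (-rh)) t := by
    simpa using hin.fun_pow 2
  have hden : HasDerivAt (fun s : ℝ => 2 * a * s) (2 * a) t := by
    simpa using (hasDerivAt_id t).const_mul (2 * a)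
  have hat : 2 * a * t ≠ 0 := by positivity
  have hdiv : HasDerivAt (fun s : ℝ => (y - (x + rh * s)) ^ 2 / (2 * a * s))
      ((2 * (y - (x + rh * t)) * (-rh) * (2 * a * t) - (y - (x + rh * t)) ^ 2 * (2 * a))
        / (2 * a * t) ^ 2) t := hnum.div hden hat
  have hq := (hlog.fun_sub hdiv).add_const ((y - (x0 + rh * T)) ^ 2 / (2 * a * T))
  have := (hq.exp).const_mul (Real.sqrt T)
  refine this.congr_deriv ?_
  unfold Kf
  field_simp
  ring

variable {μ : Measure ℝ} [IsFiniteMeasure μ]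

lemma integrable_bdd {f : ℝ → ℝ} (hf : Continuous f) (C : ℝ) (h : ∀ y, ‖f y‖ ≤ C) :
    Integrable f μ :=
  (integrable_const C).mono' hf.aestronglyMeasurable (ae_of_all _ h)

lemma integrable_Kf (a rh T x0 : ℝ) (ha : 0 < a) (hT : 0 < T)
    {θ : ℝ} (hθ0 : 0 < θ) (hθT : θ < T) (z : ℝ) :
    Integrable (fun y => Kf a rh T x0 θ z y) μ := by
  obtain ⟨C, hC, hb⟩ := bound_main a rh T x0 ha hT θ θ (|z|) hθ0 le_rfl hθT (abs_nonneg z) 0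
  refine integrable_bdd (continuous_Kf_y a rh T x0 θ z) C fun y => ?_
  rw [Real.norm_eq_abs, abs_of_nonneg (Kf_nonneg _ _ _ _ _ _ _)]
  simpa using hb θ z y le_rfl le_rfl le_rfl

/-- derivative in `x` under the integral sign -/
lemma stepB (a rh T x0 : ℝ) (ha : 0 < a) (hT : 0 < T)
    {θ : ℝ} (hθ0 : 0 < θ) (hθT : θ < T) (z : ℝ) :
    Integrable (fun y => Kf a rh T x0 θ z y * ((y - (z + rh * θ)) / (a * θ))) μ ∧
    HasDerivAt (fun w => ∫ y, Kf a rh T x0 θ w y ∂μ)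
      (∫ y, Kf a rh T x0 θ z y * ((y - (z + rh * θ)) / (a * θ)) ∂μ) z := by
  obtain ⟨C, hC, hb⟩ := bound_main a rh T x0 ha hT θ θ (|z| + 1) hθ0 le_rfl hθT (by positivity) 1
  have haθ : 0 < a * θ := by positivity
  apply hasDerivAt_integral_of_dominated_loc_of_deriv_le (ball_mem_nhds _ zero_lt_one)
    (Eventually.of_forall fun w => (continuous_Kf_y a rh T x0 θ w).aestronglyMeasurable)
    (integrable_Kf a rh T x0 ha hT hθ0 hθT z)
    (((continuous_Kf_y a rh T x0 θ z).mul (by fun_prop)).aestronglyMeasurable)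
    (ae_of_all _ fun y w hw => ?_) (integrable_const (C / (a * θ)))
    (ae_of_all _ fun y w hw => hasDerivAt_Kf_x a rh T x0 θ y ha hθ0 w)
  -- bound
  have hwz : |w| ≤ |z| + 1 := by
    have : |w - z| < 1 := by rwa [mem_ball, Real.dist_eq] at hw
    have := abs_sub_abs_le_abs_sub w z
    linarith
  have h1 : |y - (w + rh * θ)| * Kf a rh T x0 θ w y ≤ C := by
    simpa [pow_one] using hb θ w y le_rfl le_rfl hwz
  rw [Real.norm_eq_abs, abs_mul, abs_of_nonneg (Kf_nonneg _ _ _ _ _ _ _), abs_div,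
    abs_of_pos haθ]
  calc Kf a rh T x0 θ w y * (|y - (w + rh * θ)| / (a * θ))
      = (|y - (w + rh * θ)| * Kf a rh T x0 θ w y) / (a * θ) := by ring
    _ ≤ C / (a * θ) := by gcongr

/-- second derivative in `x` under the integral sign -/
lemma stepC (a rh T x0 : ℝ) (ha : 0 < a) (hT : 0 < T)
    {θ : ℝ} (hθ0 : 0 < θ) (hθT : θ < T) (x : ℝ) :
    Integrable (fun y => Kf a rh T x0 θ x y
      * (((y - (x + rh * θ)) / (a * θ)) ^ 2 - 1 / (a * θ))) μ ∧
    HasDerivAt (fun z => ∫ y, Kf a rh T x0 θ z y * ((y - (z + rh * θ)) / (a * θ)) ∂μ)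
      (∫ y, Kf a rh T x0 θ x y * (((y - (x + rh * θ)) / (a * θ)) ^ 2 - 1 / (a * θ)) ∂μ) x := by
  obtain ⟨C2, hC2, hb2⟩ :=
    bound_main a rh T x0 ha hT θ θ (|x| + 1) hθ0 le_rfl hθT (by positivity) 2
  obtain ⟨C0, hC0, hb0⟩ :=
    bound_main a rh T x0 ha hT θ θ (|x| + 1) hθ0 le_rfl hθT (by positivity) 0
  have haθ : 0 < a * θ := by positivity
  apply hasDerivAt_integral_of_dominated_loc_of_deriv_le (ball_mem_nhds _ zero_lt_one)
    (Eventually.of_forall fun w =>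
      (((continuous_Kf_y a rh T x0 θ w).mul (by fun_prop)).aestronglyMeasurable))
    (stepB a rh T x0 ha hT hθ0 hθT x).1
    (((continuous_Kf_y a rh T x0 θ x).mul (by fun_prop)).aestronglyMeasurable)
    (ae_of_all _ fun y w hw => ?_) (integrable_const (C2 / (a * θ) ^ 2 + C0 / (a * θ)))
    (ae_of_all _ fun y w hw => hasDerivAt_Kf_xx a rh T x0 θ y ha hθ0 w)
  have hwz : |w| ≤ |x| + 1 := by
    have : |w - x| < 1 := by rwa [mem_ball, Real.dist_eq] at hw
    have := abs_sub_abs_le_abs_sub w x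
    linarith
  have h2 : |y - (w + rh * θ)| ^ 2 * Kf a rh T x0 θ w y ≤ C2 :=
    hb2 θ w y le_rfl le_rfl hwz
  have h0 : Kf a rh T x0 θ w y ≤ C0 := by
    simpa using hb0 θ w y le_rfl le_rfl hwz
  rw [Real.norm_eq_abs, abs_mul, abs_of_nonneg (Kf_nonneg _ _ _ _ _ _ _)]
  have habs : |((y - (w + rh * θ)) / (a * θ)) ^ 2 - 1 / (a * θ)|
      ≤ ((y - (w + rh * θ)) / (a * θ)) ^ 2 + 1 / (a * θ) := by
    rw [sub_eq_add_neg]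
    refine (abs_add_le _ _).trans ?_
    rw [abs_neg, abs_of_nonneg (sq_nonneg _), abs_of_pos (by positivity : (0:ℝ) < 1 / (a * θ))]
  calc Kf a rh T x0 θ w y * |((y - (w + rh * θ)) / (a * θ)) ^ 2 - 1 / (a * θ)|
      ≤ Kf a rh T x0 θ w y * (((y - (w + rh * θ)) / (a * θ)) ^ 2 + 1 / (a * θ)) :=
        mul_le_mul_of_nonneg_left habs (Kf_nonneg _ _ _ _ _ _ _)
    _ = (|y - (w + rh * θ)| ^ 2 * Kf a rh T x0 θ w y) / (a * θ) ^ 2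
          + Kf a rh T x0 θ w y / (a * θ) := by
        rw [div_pow, sq_abs]; ring
    _ ≤ C2 / (a * θ) ^ 2 + C0 / (a * θ) := by gcongr

/-- derivative in `t` under the integral sign -/
lemma stepD (a rh T x0 : ℝ) (ha : 0 < a) (hT : 0 < T)
    {θ : ℝ} (hθ0 : 0 < θ) (hθT : θ < T) (x : ℝ) :
    Integrable (fun y => Kf a rh T x0 θ x y * (-(1 / (2 * θ))
      + rh * (y - (x + rh * θ)) / (a * θ) + (y - (x + rh * θ)) ^ 2 / (2 * a * θ ^ 2))) μ ∧
    HasDerivAt (fun t => ∫ y, Kf a rh T x0 t x y ∂μ)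
      (∫ y, Kf a rh T x0 θ x y * (-(1 / (2 * θ)) + rh * (y - (x + rh * θ)) / (a * θ)
        + (y - (x + rh * θ)) ^ 2 / (2 * a * θ ^ 2)) ∂μ) θ := by
  have ht1 : (0:ℝ) < θ / 2 := by linarith
  have h12 : θ / 2 ≤ (θ + T) / 2 := by linarith
  have ht2 : (θ + T) / 2 < T := by linarith
  obtain ⟨C0, hC0, hb0⟩ :=
    bound_main a rh T x0 ha hT (θ/2) ((θ+T)/2) (|x|) ht1 h12 ht2 (abs_nonneg x) 0
  obtain ⟨C1, hC1, hb1⟩ :=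
    bound_main a rh T x0 ha hT (θ/2) ((θ+T)/2) (|x|) ht1 h12 ht2 (abs_nonneg x) 1
  obtain ⟨C2, hC2, hb2⟩ :=
    bound_main a rh T x0 ha hT (θ/2) ((θ+T)/2) (|x|) ht1 h12 ht2 (abs_nonneg x) 2
  have hε : (0:ℝ) < min (θ/2) ((T-θ)/2) := lt_min ht1 (by linarith)
  have hball : ∀ t ∈ ball θ (min (θ/2) ((T-θ)/2)), θ/2 ≤ t ∧ t ≤ (θ+T)/2 := by
    intro t ht
    rw [mem_ball, Real.dist_eq, abs_lt] at ht
    constructor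
    · have := min_le_left (θ/2) ((T-θ)/2); linarith
    · have := min_le_right (θ/2) ((T-θ)/2); linarith
  apply hasDerivAt_integral_of_dominated_loc_of_deriv_le (ball_mem_nhds _ hε)
    (Eventually.of_forall fun t => (continuous_Kf_y a rh T x0 t x).aestronglyMeasurable)
    (integrable_Kf a rh T x0 ha hT hθ0 hθT x)
    (((continuous_Kf_y a rh T x0 θ x).mul (by fun_prop)).aestronglyMeasurable)
    (ae_of_all _ fun y t ht => ?_)
    (integrable_const (1/(2*(θ/2)) * C0 + |rh|/(a*(θ/2)) * C1 + 1/(2*a*(θ/2)^2) * C2))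
    (ae_of_all _ fun y t ht => hasDerivAt_Kf_t a rh T x0 x y ha
      (lt_of_lt_of_le ht1 (hball t ht).1))
  obtain ⟨hta, htb⟩ := hball t ht
  have htpos : 0 < t := lt_of_lt_of_le ht1 hta
  have h0 : Kf a rh T x0 t x y ≤ C0 := by simpa using hb0 t x y hta htb le_rfl
  have h1 : |y - (x + rh * t)| * Kf a rh T x0 t x y ≤ C1 := by
    simpa [pow_one] using hb1 t x y hta htb le_rfl
  have h2 : (y - (x + rh * t)) ^ 2 * Kf a rh T x0 t x y ≤ C2 := by
    have := hb2 t x y hta htb le_rfl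
    rwa [sq_abs] at this
  rw [Real.norm_eq_abs, abs_mul, abs_of_nonneg (Kf_nonneg _ _ _ _ _ _ _)]
  have e := abs_add_three (-(1 / (2 * t))) (rh * (y - (x + rh * t)) / (a * t))
    ((y - (x + rh * t)) ^ 2 / (2 * a * t ^ 2))
  have e1 : |(-(1 / (2 * t)))| ≤ 1 / (2 * (θ/2)) := by
    rw [abs_neg, abs_of_pos (by positivity)]
    exact one_div_le_one_div_of_le (by positivity) (by linarith)
  have e2 : |rh * (y - (x + rh * t)) / (a * t)| ≤ |rh| * |y - (x + rh * t)| / (a * (θ/2)) := by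
    rw [abs_div, abs_mul, abs_of_pos (by positivity : (0:ℝ) < a * t)]
    gcongr
  have e3 : |(y - (x + rh * t)) ^ 2 / (2 * a * t ^ 2)|
      ≤ (y - (x + rh * t)) ^ 2 / (2 * a * (θ/2) ^ 2) := by
    rw [abs_of_nonneg (by positivity)]
    gcongr
  calc Kf a rh T x0 t x y * |(-(1 / (2 * t)) + rh * (y - (x + rh * t)) / (a * t)
        + (y - (x + rh * t)) ^ 2 / (2 * a * t ^ 2))|
      ≤ Kf a rh T x0 t x y * (1 / (2 * (θ/2)) + |rh| * |y - (x + rh * t)| / (a * (θ/2))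
          + (y - (x + rh * t)) ^ 2 / (2 * a * (θ/2) ^ 2)) := by
        apply mul_le_mul_of_nonneg_left _ (Kf_nonneg _ _ _ _ _ _ _)
        linarith [e, e1, e2, e3]
    _ = 1/(2*(θ/2)) * Kf a rh T x0 t x y
          + |rh|/(a*(θ/2)) * (|y - (x + rh * t)| * Kf a rh T x0 t x y)
          + 1/(2*a*(θ/2)^2) * ((y - (x + rh * t)) ^ 2 * Kf a rh T x0 t x y) := by ring
    _ ≤ 1/(2*(θ/2)) * C0 + |rh|/(a*(θ/2)) * C1 + 1/(2*a*(θ/2)^2) * C2 := by gcongr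

/-- the pointwise identity integrated -/
lemma integral_Kt_eq (a rh T x0 : ℝ) (ha : 0 < a) (hT : 0 < T)
    {θ : ℝ} (hθ0 : 0 < θ) (hθT : θ < T) (x : ℝ) :
    (∫ y, Kf a rh T x0 θ x y * (-(1 / (2 * θ)) + rh * (y - (x + rh * θ)) / (a * θ)
        + (y - (x + rh * θ)) ^ 2 / (2 * a * θ ^ 2)) ∂μ)
    = a / 2 * (∫ y, Kf a rh T x0 θ x y
          * (((y - (x + rh * θ)) / (a * θ)) ^ 2 - 1 / (a * θ)) ∂μ)
      + rh * (∫ y, Kf a rh T x0 θ x y * ((y - (x + rh * θ)) / (a * θ)) ∂μ) := by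
  have hIx := (stepB (μ := μ) a rh T x0 ha hT hθ0 hθT x).1
  have hIxx := (stepC (μ := μ) a rh T x0 ha hT hθ0 hθT x).1
  have hfe : (fun y => Kf a rh T x0 θ x y * (-(1 / (2 * θ)) + rh * (y - (x + rh * θ)) / (a * θ)
        + (y - (x + rh * θ)) ^ 2 / (2 * a * θ ^ 2)))
      = fun y => a / 2 * (Kf a rh T x0 θ x y
          * (((y - (x + rh * θ)) / (a * θ)) ^ 2 - 1 / (a * θ)))
        + rh * (Kf a rh T x0 θ x y * ((y - (x + rh * θ)) / (a * θ))) := by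
    funext y
    have haθ : a * θ ≠ 0 := by positivity
    field_simp
    ring
  rw [hfe, integral_add (hIxx.const_mul _) (hIx.const_mul _),
    integral_const_mul, integral_const_mul]

/-- For a finite nonnegative measure `μ`, the function
`Ψ(θ,x) = e^{-rθ} ∫ N(x+r̂θ,σ²θ,y)/N(x0+r̂T,σ²T,y) μ(dy)` is well defined on
`(0,T) × ℝ` and satisfies the Black–Scholes PDE
`D₁Ψ = (σ²/2) D₂₂Ψ + (r - σ²/2) D₂Ψ - rΨ` there. -/
theorem Psi_solves_BlackScholes_PDE
    (r σ T x0 : ℝ) (hr : 0 ≤ r) (hσ : 0 < σ) (hT : 0 < T)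
    (μ : Measure ℝ) [IsFiniteMeasure μ] :
    ∀ θ ∈ Set.Ioo (0 : ℝ) T, ∀ x : ℝ,
      Integrable (fun y => kern r σ x0 T θ x y) μ ∧
      deriv (fun t => Psi r σ x0 T μ t x) θ =
        σ ^ 2 / 2 * deriv (fun z => deriv (fun w => Psi r σ x0 T μ θ w) z) x
          + (r - σ ^ 2 / 2) * deriv (fun z => Psi r σ x0 T μ θ z) x
          - r * Psi r σ x0 T μ θ x := by
  intro θ hθ x
  obtain ⟨hθ0, hθT⟩ := hθ
  have ha : (0:ℝ) < σ ^ 2 := by positivity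
  have hkernKf : ∀ t, 0 < t → ∀ z : ℝ, (fun y => kern r σ x0 T t z y)
      = fun y => Kf (σ^2) (r - σ^2/2) T x0 t z y :=
    fun t ht z => funext fun y => kern_eq_Kf r σ x0 T hσ hT ht z y
  have hPsi_eq : ∀ t, 0 < t → ∀ z : ℝ, Psi r σ x0 T μ t z
      = Real.exp (-(r*t)) * ∫ y, Kf (σ^2) (r - σ^2/2) T x0 t z y ∂μ := by
    intro t ht z
    unfold Psi
    rw [hkernKf t ht z]
  constructor
  · rw [hkernKf θ hθ0 x]
    exact integrable_Kf (μ := μ) _ _ _ _ ha hT hθ0 hθT x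
  · -- first x-derivative, at every point z
    have hx1 : ∀ z : ℝ, deriv (fun w => Psi r σ x0 T μ θ w) z
        = Real.exp (-(r*θ)) * ∫ y, Kf (σ^2) (r-σ^2/2) T x0 θ z y
            * ((y - (z + (r-σ^2/2) * θ)) / (σ^2 * θ)) ∂μ := by
      intro z
      have heq : (fun w => Psi r σ x0 T μ θ w)
          = fun w => Real.exp (-(r*θ)) * ∫ y, Kf (σ^2) (r - σ^2/2) T x0 θ w y ∂μ :=
        funext fun w => hPsi_eq θ hθ0 w
      rw [heq]
      exact (((stepB (μ := μ) (σ^2) (r-σ^2/2) T x0 ha hT hθ0 hθT z).2).const_mul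
        (Real.exp (-(r*θ)))).deriv
    -- second x-derivative
    have hx2 : deriv (fun z => deriv (fun w => Psi r σ x0 T μ θ w) z) x
        = Real.exp (-(r*θ)) * ∫ y, Kf (σ^2) (r-σ^2/2) T x0 θ x y
            * (((y - (x + (r-σ^2/2) * θ)) / (σ^2 * θ)) ^ 2 - 1 / (σ^2 * θ)) ∂μ := by
      have heq : (fun z => deriv (fun w => Psi r σ x0 T μ θ w) z)
          = fun z => Real.exp (-(r*θ)) * ∫ y, Kf (σ^2) (r-σ^2/2) T x0 θ z y
              * ((y - (z + (r-σ^2/2) * θ)) / (σ^2 * θ)) ∂μ := funext hx1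
      rw [heq]
      exact (((stepC (μ := μ) (σ^2) (r-σ^2/2) T x0 ha hT hθ0 hθT x).2).const_mul
        (Real.exp (-(r*θ)))).deriv
    -- θ-derivative
    have hexp : HasDerivAt (fun t => Real.exp (-(r*t))) (Real.exp (-(r*θ)) * (-r)) θ := by
      have := (((hasDerivAt_id θ).const_mul r).neg).exp
      simpa using this
    have hg := (stepD (μ := μ) (σ^2) (r-σ^2/2) T x0 ha hT hθ0 hθT x).2
    have hprod := hexp.mul hg
    have heqt : (fun t => Psi r σ x0 T μ t x) =ᶠ[nhds θ]
        fun t => Real.exp (-(r*t)) * ∫ y, Kf (σ^2) (r-σ^2/2) T x0 t x y ∂μ := by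
      filter_upwards [Ioo_mem_nhds hθ0 hθT] with t ht using hPsi_eq t ht.1 x
    have ht1 : deriv (fun t => Psi r σ x0 T μ t x) θ
        = Real.exp (-(r*θ)) * (-r) * (∫ y, Kf (σ^2) (r-σ^2/2) T x0 θ x y ∂μ)
          + Real.exp (-(r*θ)) * ∫ y, Kf (σ^2) (r-σ^2/2) T x0 θ x y
              * (-(1 / (2 * θ)) + (r-σ^2/2) * (y - (x + (r-σ^2/2) * θ)) / (σ^2 * θ)
                + (y - (x + (r-σ^2/2) * θ)) ^ 2 / (2 * σ^2 * θ ^ 2)) ∂μ := by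
      rw [heqt.deriv_eq]
      exact hprod.deriv
    rw [ht1, hx2, hx1 x, hPsi_eq θ hθ0 x,
      integral_Kt_eq (σ^2) (r-σ^2/2) T x0 ha hT hθ0 hθT x]
    ring
end

section
/- Let g : ℝ → [0,∞) be upper semicontinuous with E[sup_{t∈[0,T]} g(X_t^x)] < ∞ for every x ∈ ℝ, and let f : ℝ → [0,∞) be measurable with v_f(θ,x) < ∞ for all (θ,x) ∈ [0,T]×ℝ. If f dominates g up to T, i.e. v_f(θ,x) ≥ g(x) for all θ ∈ [0,T] and x ∈ ℝ, then g(x) ≤ v_am(θ,x) ≤ v_f(θ,x) for all θ ∈ [0,T] and x ∈ ℝ; in particular g(x) ≤ inf_{θ∈[0,T]} v_f(θ,x) ≤ f(x) for all x ∈ ℝ. -/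
open MeasureTheory Filter Set
open scoped ENNReal NNReal

/-- European value of a payoff function `f`:
`v_f(θ,x) = e^{-rθ} ∫ N(x+r̂θ,σ²θ,y) f(y) dy` for `θ > 0`, `v_f(0,x) = f(x)`. -/
noncomputable def vEu (r σ : ℝ) (f : ℝ → ℝ) (θ x : ℝ) : ℝ :=
  if θ = 0 then f x
  else Real.exp (-(r * θ)) * ∫ y, gauss (x + (r - σ ^ 2 / 2) * θ) (σ ^ 2 * θ) y * f y

/-- The American value: supremum of `E[e^{-rτ} g(X_τ^x)]` over all stopping
times `τ` with values in `[0,θ]`, where `X_t^x = x + (r - σ²/2)t + σW_t`. -/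
noncomputable def vAm {Ω : Type*} {mΩ : MeasurableSpace Ω} (P : Measure Ω)
    (F : Filtration ℝ mΩ) (W : ℝ → Ω → ℝ) (r σ : ℝ) (g : ℝ → ℝ) (θ x : ℝ) : ℝ :=
  sSup {e : ℝ | ∃ τ : Ω → ℝ, IsStoppingTime F (fun ω => (τ ω : WithTop ℝ)) ∧ (∀ ω, τ ω ∈ Set.Icc 0 θ) ∧
    e = ∫ ω, Real.exp (-(r * τ ω)) *
          g (x + (r - σ ^ 2 / 2) * τ ω + σ * W (τ ω) ω) ∂P}

open ProbabilityTheory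
open scoped Topology

lemma measurable_gauss (m s2 : ℝ) : Measurable (gauss m s2) := by
  unfold gauss; fun_prop

lemma gauss_nonneg (m s2 y : ℝ) : 0 ≤ gauss m s2 y :=
  mul_nonneg (inv_nonneg.2 (Real.sqrt_nonneg _)) (Real.exp_nonneg _)

lemma gaussianPDFReal_eq_gauss (m : ℝ) {s2 : ℝ} (hs2 : 0 ≤ s2) (z : ℝ) :
    gaussianPDFReal m (Real.toNNReal s2) z = gauss m s2 z := by
  rw [gaussianPDFReal, gauss, Real.coe_toNNReal _ hs2]

lemma gauss_continuousAt {m s2 : ℝ} (hs2 : 0 < s2) (z : ℝ) :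
    ContinuousAt (fun p : ℝ × ℝ => gauss p.1 p.2 z) (m, s2) := by
  have h1 : ContinuousAt (fun p : ℝ × ℝ => (Real.sqrt (2 * Real.pi * p.2))⁻¹) (m, s2) := by
    refine ContinuousAt.inv₀ ?_ ?_
    · exact (Real.continuous_sqrt.comp (by fun_prop)).continuousAt
    · positivity
  have h2 : ContinuousAt (fun p : ℝ × ℝ => Real.exp (-((z - p.1) ^ 2) / (2 * p.2))) (m, s2) := by
    refine (Real.continuous_exp.continuousAt).comp ?_
    refine ContinuousAt.div (by fun_prop) (by fun_prop) (by positivity)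
  exact h1.mul h2

/-- USC functions are bounded above on compacts. -/
lemma usc_bddAbove {g : ℝ → ℝ} (hg : UpperSemicontinuous g) {K : Set ℝ} (hK : IsCompact K) :
    BddAbove (g '' K) := by
  obtain ⟨t, ht⟩ := hK.elim_finite_subcover (fun n : ℕ => g ⁻¹' Iio (n : ℝ))
    (fun n => hg.isOpen_preimage _)
    (fun y _ => by
      obtain ⟨n, hn⟩ := exists_nat_gt (g y)
      exact Set.mem_iUnion.2 ⟨n, hn⟩)
  refine ⟨(t.sup id : ℕ), ?_⟩
  rintro _ ⟨y, hyK, rfl⟩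
  obtain ⟨n, hnt, hn⟩ := Set.mem_iUnion₂.1 (ht hyK)
  exact le_trans hn.le (Nat.cast_le.2 (Finset.le_sup (f := id) hnt))

/-- Gaussian transition operator in `ℝ≥0∞`. -/
noncomputable def Qker (r σ : ℝ) (f : ℝ → ℝ) (s y : ℝ) : ℝ≥0∞ :=
  ∫⁻ z, ENNReal.ofReal (f z)
    ∂(gaussianReal (y + (r - σ ^ 2 / 2) * s) (Real.toNNReal (σ ^ 2 * s)))

lemma Qker_zero (r σ : ℝ) (f : ℝ → ℝ) (hfm : Measurable f) (y : ℝ) :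
    Qker r σ f 0 y = ENNReal.ofReal (f y) := by
  rw [Qker]
  simp only [mul_zero, Real.toNNReal_zero, gaussianReal_zero_var, add_zero]
  rw [lintegral_dirac' _ (by fun_prop)]

lemma Qker_pos_eq (r σ : ℝ) (f : ℝ → ℝ) (hfm : Measurable f) {s : ℝ} (hσ : 0 < σ)
    (hs : 0 < s) (y : ℝ) :
    Qker r σ f s y = ∫⁻ z, ENNReal.ofReal (gauss (y + (r - σ ^ 2 / 2) * s) (σ ^ 2 * s) z)
      * ENNReal.ofReal (f z) := by
  have hv : 0 < σ ^ 2 * s := by positivity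
  have hv' : Real.toNNReal (σ ^ 2 * s) ≠ 0 := by
    simp [Real.toNNReal_eq_zero, not_le, hv]
  rw [Qker, gaussianReal_of_var_ne_zero _ hv',
    lintegral_withDensity_eq_lintegral_mul _ (measurable_gaussianPDF _ _) (by fun_prop)]
  refine lintegral_congr fun z => ?_
  simp only [Pi.mul_apply, gaussianPDF, gaussianPDFReal_eq_gauss _ hv.le]

lemma Qker_eq_ofReal_integral {r σ T : ℝ} (f : ℝ → ℝ) (hfm : Measurable f)
    (hf0 : ∀ x, 0 ≤ f x) (hσ : 0 < σ)
    (hfint : ∀ θ ∈ Set.Icc (0 : ℝ) T, ∀ x : ℝ,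
      Integrable (fun y => gauss (x + (r - σ ^ 2 / 2) * θ) (σ ^ 2 * θ) y * f y))
    {s : ℝ} (hs : 0 < s) (hsT : s ≤ T) (y : ℝ) :
    Qker r σ f s y
      = ENNReal.ofReal (∫ z, gauss (y + (r - σ ^ 2 / 2) * s) (σ ^ 2 * s) z * f z) := by
  rw [Qker_pos_eq r σ f hfm hσ hs y,
    ofReal_integral_eq_lintegral_ofReal (hfint s ⟨hs.le, hsT⟩ y)
      (Filter.Eventually.of_forall fun z => mul_nonneg (gauss_nonneg _ _ _) (hf0 z))]
  refine (lintegral_congr fun z => ?_).symm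
  rw [ENNReal.ofReal_mul (gauss_nonneg _ _ _)]

lemma measurable_Qker (r σ : ℝ) (f : ℝ → ℝ) (hfm : Measurable f) (s : ℝ) :
    Measurable (fun y => Qker r σ f s y) := by
  by_cases hv : Real.toNNReal (σ ^ 2 * s) = 0
  · simp only [Qker, hv, gaussianReal_zero_var]
    have : (fun y => ∫⁻ z, ENNReal.ofReal (f z)
        ∂(Measure.dirac (y + (r - σ ^ 2 / 2) * s)))
        = fun y => ENNReal.ofReal (f (y + (r - σ ^ 2 / 2) * s)) := by
      funext y; rw [lintegral_dirac' _ (by fun_prop)]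
    rw [this]; fun_prop
  · simp only [Qker, gaussianReal_of_var_ne_zero _ hv]
    have : (fun y => ∫⁻ z, ENNReal.ofReal (f z)
        ∂(volume.withDensity (gaussianPDF (y + (r - σ ^ 2 / 2) * s) (Real.toNNReal (σ ^ 2 * s)))))
        = fun y => ∫⁻ z, gaussianPDF (y + (r - σ ^ 2 / 2) * s) (Real.toNNReal (σ ^ 2 * s)) z
            * ENNReal.ofReal (f z) := by
      funext y
      rw [lintegral_withDensity_eq_lintegral_mul _ (measurable_gaussianPDF _ _) (by fun_prop)]
      rfl
    rw [this]
    have hjoint : Measurable (fun p : ℝ × ℝ =>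
        gaussianPDF (p.1 + (r - σ ^ 2 / 2) * s) (Real.toNNReal (σ ^ 2 * s)) p.2
          * ENNReal.ofReal (f p.2)) := by
      refine Measurable.fun_mul ?_ (by fun_prop)
      simp only [gaussianPDF, gaussianPDFReal]
      fun_prop
    exact hjoint.lintegral_prod_right'

lemma gauss_dom {vlo vhi V M : ℝ} (h0 : 0 < vlo) (hle : vlo ≤ vhi) (hhi : vhi < V) :
    ∃ C : ℝ, 0 ≤ C ∧ ∀ μ v z, vlo ≤ v → v ≤ vhi → |μ - M| ≤ 1 →
      gauss μ v z ≤ C * gauss M V z := by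
  have hvhi : 0 < vhi := h0.trans_le hle
  have hV : 0 < V := hvhi.trans hhi
  have hW : 0 < V - vhi := sub_pos.2 hhi
  refine ⟨(Real.sqrt (2*Real.pi*vlo))⁻¹ * Real.sqrt (2*Real.pi*V)
      * Real.exp (V/(2*vhi*(V-vhi))), by positivity, ?_⟩
  intro μ v z hv1 hv2 hμ
  have hv : 0 < v := h0.trans_le hv1
  have hδ2 : (μ - M)^2 ≤ 1 := by
    have h := abs_le.1 hμ
    nlinarith [h.1, h.2]
  have hexp : Real.exp (-((z-μ)^2) / (2*v))
      ≤ Real.exp (V/(2*vhi*(V-vhi))) * Real.exp (-((z-M)^2)/(2*V)) := by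
    rw [← Real.exp_add, Real.exp_le_exp]
    have h1 : -((z-μ)^2)/(2*v) ≤ -((z-μ)^2)/(2*vhi) := by
      rw [neg_div, neg_div, neg_le_neg_iff]
      exact div_le_div_of_nonneg_left (sq_nonneg _) (by positivity) (by linarith)
    have key : (z-M)^2*(vhi*(V-vhi)) ≤ (z-μ)^2*(V*(V-vhi)) + V^2 := by
      nlinarith [sq_nonneg ((z-M)*(V-vhi) - (μ-M)*V), hδ2, sq_nonneg (z-M), sq_nonneg (z-μ),
        mul_pos hV hW, mul_pos hvhi hW, sq_nonneg V]
    have h2 : -((z-μ)^2)/(2*vhi) ≤ V/(2*vhi*(V-vhi)) + -((z-M)^2)/(2*V) := by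
      rw [div_add_div _ _ (by positivity : (2*vhi*(V-vhi)) ≠ 0) (by positivity : (2*V) ≠ 0),
        div_le_div_iff₀ (by positivity) (by positivity)]
      nlinarith [key, hvhi, hV, hW]
    linarith
  have hinv : (Real.sqrt (2*Real.pi*v))⁻¹ ≤ (Real.sqrt (2*Real.pi*vlo))⁻¹ := by
    refine inv_anti₀ (by positivity) (Real.sqrt_le_sqrt ?_)
    nlinarith [Real.pi_pos]
  rw [gauss, gauss]
  calc (Real.sqrt (2*Real.pi*v))⁻¹ * Real.exp (-((z-μ)^2) / (2*v))
      ≤ (Real.sqrt (2*Real.pi*vlo))⁻¹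
        * (Real.exp (V/(2*vhi*(V-vhi))) * Real.exp (-((z-M)^2)/(2*V))) :=
        mul_le_mul hinv hexp (Real.exp_nonneg _) (by positivity)
    _ = ((Real.sqrt (2*Real.pi*vlo))⁻¹ * Real.sqrt (2*Real.pi*V)
        * Real.exp (V/(2*vhi*(V-vhi))))
        * ((Real.sqrt (2*Real.pi*V))⁻¹ * Real.exp (-((z-M)^2) / (2*V))) := by
        have hs : Real.sqrt (2*Real.pi*V) ≠ 0 := by positivity
        field_simp

lemma tendsto_Qker {r σ T : ℝ} (hσ : 0 < σ) {f : ℝ → ℝ} (hfm : Measurable f)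
    (hf0 : ∀ x, 0 ≤ f x)
    (hfint : ∀ θ ∈ Set.Icc (0 : ℝ) T, ∀ x : ℝ,
      Integrable (fun y => gauss (x + (r - σ ^ 2 / 2) * θ) (σ ^ 2 * θ) y * f y))
    {s : ℝ} (hs0 : 0 < s) (hsT : s < T) {y : ℝ} {sn yn : ℕ → ℝ}
    (hsn : Tendsto sn atTop (𝓝 s)) (hyn : Tendsto yn atTop (𝓝 y)) :
    Tendsto (fun n => Qker r σ f (sn n) (yn n)) atTop (𝓝 (Qker r σ f s y)) := by
  set rh : ℝ := r - σ ^ 2 / 2 with hrh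
  set M : ℝ := y + rh * s with hM
  set s' : ℝ := (s + T) / 2 with hs'
  set shi : ℝ := (3 * s + T) / 4 with hshi
  have hs'T : s' ≤ T := by rw [hs']; linarith
  have hs'0 : 0 < s' := by rw [hs']; linarith
  have hshi0 : 0 < shi := by rw [hshi]; linarith
  have hshilt : shi < s' := by rw [hshi, hs']; linarith
  -- eventual bounds
  have hev : ∀ᶠ n in atTop, s / 2 ≤ sn n ∧ sn n ≤ shi ∧ |yn n + rh * sn n - M| ≤ 1 := by
    have h1 : ∀ᶠ n in atTop, s / 2 ≤ sn n := hsn (le_mem_nhds (by linarith))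
    have h2 : ∀ᶠ n in atTop, sn n < shi := hsn (Iio_mem_nhds (by rw [hshi]; linarith))
    have h3 : Tendsto (fun n => yn n + rh * sn n) atTop (𝓝 M) := by
      rw [hM]; exact hyn.add (tendsto_const_nhds.mul hsn)
    have h4 : ∀ᶠ n in atTop, |yn n + rh * sn n - M| ≤ 1 := by
      have := h3.sub (tendsto_const_nhds (x := M))
      simp only [sub_self] at this
      have h5 := this.abs
      rw [abs_zero] at h5
      exact h5 (Iic_mem_nhds one_pos)
    filter_upwards [h1, h2, h4] with n a b c using ⟨a, b.le, c⟩
  rw [Filter.eventually_atTop] at hev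
  obtain ⟨N, hN⟩ := hev
  rw [← Filter.tendsto_add_atTop_iff_nat N]
  -- dominating constant
  obtain ⟨C, hC0, hC⟩ := gauss_dom (vlo := σ ^ 2 * (s / 2)) (vhi := σ ^ 2 * shi)
    (V := σ ^ 2 * s') (M := M) (by positivity) (by nlinarith [sq_nonneg σ])
    (by nlinarith [sq_nonneg σ, pow_pos hσ 2])
  have hVpos : 0 < σ ^ 2 * s' := by positivity
  -- integrable bound
  have hint : Integrable (fun z => gauss M (σ ^ 2 * s') z * f z) := by
    have h := hfint s' ⟨hs'0.le, hs'T⟩ (M - rh * s')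
    simpa [← hrh, sub_add_cancel] using h
  set bound : ℝ → ℝ≥0∞ := fun z => ENNReal.ofReal (C * gauss M (σ ^ 2 * s') z)
    * ENNReal.ofReal (f z) with hbound
  have h_fin : ∫⁻ z, bound z ≠ ∞ := by
    have heq : ∫⁻ z, bound z = ENNReal.ofReal (∫ z, C * (gauss M (σ ^ 2 * s') z * f z)) := by
      rw [ofReal_integral_eq_lintegral_ofReal (hint.const_mul C)
        (Filter.Eventually.of_forall fun z =>
          mul_nonneg hC0 (mul_nonneg (gauss_nonneg _ _ _) (hf0 z)))]
      refine lintegral_congr fun z => ?_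
      rw [hbound, ← mul_assoc, ENNReal.ofReal_mul (mul_nonneg hC0 (gauss_nonneg _ _ _))]
    rw [heq]; exact ENNReal.ofReal_ne_top
  have hpos : ∀ n, 0 < sn (n + N) := fun n => lt_of_lt_of_le (by linarith) (hN (n + N) le_add_self).1
  have hrw : ∀ n, Qker r σ f (sn (n + N)) (yn (n + N))
      = ∫⁻ z, ENNReal.ofReal (gauss (yn (n + N) + rh * sn (n + N)) (σ ^ 2 * sn (n + N)) z)
          * ENNReal.ofReal (f z) := fun n => Qker_pos_eq r σ f hfm hσ (hpos n) _
  have hrwlim : Qker r σ f s y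
      = ∫⁻ z, ENNReal.ofReal (gauss M (σ ^ 2 * s) z) * ENNReal.ofReal (f z) :=
    Qker_pos_eq r σ f hfm hσ hs0 y
  simp only [hrw, hrwlim]
  refine tendsto_lintegral_of_dominated_convergence bound (fun n => ?_) (fun n => ?_) h_fin ?_
  · exact ((measurable_gauss _ _).ennreal_ofReal.mul (by fun_prop))
  · refine Filter.Eventually.of_forall fun z => ?_
    have h := hN (n + N) le_add_self
    refine mul_le_mul_left (ENNReal.ofReal_le_ofReal ?_) _
    refine hC _ _ z ?_ ?_ h.2.2
    · calc σ ^ 2 * (s / 2) ≤ σ ^ 2 * sn (n + N) := by nlinarith [h.1, sq_nonneg σ]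
      _ = _ := rfl
    · nlinarith [h.2.1, sq_nonneg σ]
  · refine Filter.Eventually.of_forall fun z => ?_
    have hvpos : (0 : ℝ) < σ ^ 2 * s := by positivity
    have h1 : Tendsto (fun n => (yn (n + N) + rh * sn (n + N), σ ^ 2 * sn (n + N))) atTop
        (𝓝 (M, σ ^ 2 * s)) := by
      rw [hM]
      refine Filter.Tendsto.prodMk_nhds ?_ ?_
      · exact ((hyn.comp (tendsto_add_atTop_nat N)).add
          (tendsto_const_nhds.mul (hsn.comp (tendsto_add_atTop_nat N))))
      · exact tendsto_const_nhds.mul (hsn.comp (tendsto_add_atTop_nat N))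
    have h2 := ((gauss_continuousAt (m := M) hvpos z).tendsto.comp h1)
    have h3 := (ENNReal.continuous_ofReal.continuousAt.tendsto.comp h2)
    exact ENNReal.Tendsto.mul_const h3 (Or.inr ENNReal.ofReal_ne_top)

lemma key_lemma {Ω : Type*} {mΩ : MeasurableSpace Ω} (P : Measure Ω) [IsProbabilityMeasure P]
    (F : Filtration ℝ mΩ) (W : ℝ → Ω → ℝ)
    (hWadapted : Adapted F W)
    (hWgauss : ∀ s t : ℝ, 0 ≤ s → s ≤ t →
      P.map (fun ω => W t ω - W s ω) = gaussianReal 0 (Real.toNNReal (t - s)))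
    (hWindep : ∀ s t : ℝ, 0 ≤ s → s ≤ t →
      Indep (MeasurableSpace.comap (fun ω => W t ω - W s ω) (borel ℝ)) (F s) P)
    (r σ x : ℝ) (hσ : 0 < σ) {f : ℝ → ℝ} (hfm : Measurable f)
    {t θ : ℝ} (ht : 0 ≤ t) (htθ : t ≤ θ) {A : Set Ω} (hA : MeasurableSet[F t] A) :
    ∫⁻ ω in A, ENNReal.ofReal (f (x + (r - σ ^ 2 / 2) * θ + σ * W θ ω)) ∂P
      = ∫⁻ ω in A, Qker r σ f (θ - t) (x + (r - σ ^ 2 / 2) * t + σ * W t ω) ∂P := by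
  set rh : ℝ := r - σ ^ 2 / 2 with hrh
  set ξ : Ω → ℝ := fun ω => W θ ω - W t ω with hξdef
  set V : Ω → ℝ × ℝ := fun ω => (W t ω, A.indicator (fun _ => (1:ℝ)) ω) with hVdef
  have hWt : Measurable (W t) := ((hWadapted t)).mono (F.le t) le_rfl
  have hWθ : Measurable (W θ) := ((hWadapted θ)).mono (F.le θ) le_rfl
  have hξ : Measurable ξ := hWθ.sub hWt
  have hAΩ : MeasurableSet A := F.le t A hA
  have hV : Measurable V := hWt.prodMk (measurable_const.indicator hAΩ)
  have hVF : Measurable[F t] V :=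
    ((hWadapted t)).prodMk (measurable_const.indicator hA)
  have hIndep : IndepFun V ξ P := by
    have h := hWindep t θ ht htθ
    have hbor : (borel ℝ) = (inferInstance : MeasurableSpace ℝ) := rfl
    rw [hbor] at h
    exact indep_of_indep_of_le_left h.symm hVF.comap_le
  have hmap : P.map (fun ω => (V ω, ξ ω)) = (P.map V).prod (P.map ξ) :=
    (indepFun_iff_map_prod_eq_prod_map_map hV.aemeasurable hξ.aemeasurable).1 hIndep
  set H : (ℝ × ℝ) × ℝ → ℝ≥0∞ :=
    fun q => ENNReal.ofReal q.1.2 * ENNReal.ofReal (f (x + rh * θ + σ * (q.1.1 + q.2)))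
    with hHdef
  have hH : Measurable H := by
    refine Measurable.fun_mul (by fun_prop) ?_
    exact (hfm.comp (by fun_prop)).ennreal_ofReal
  have hQm : Measurable (fun p : ℝ × ℝ => Qker r σ f (θ - t) (x + rh * t + σ * p.1)) :=
    (measurable_Qker r σ f hfm (θ - t)).comp (by fun_prop)
  have hGm : Measurable (fun p : ℝ × ℝ =>
      ENNReal.ofReal p.2 * Qker r σ f (θ - t) (x + rh * t + σ * p.1)) :=
    (by fun_prop : Measurable fun p : ℝ × ℝ => ENNReal.ofReal p.2).mul hQm
  have hL : ∫⁻ ω in A, ENNReal.ofReal (f (x + rh * θ + σ * W θ ω)) ∂P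
      = ∫⁻ ω, H (V ω, ξ ω) ∂P := by
    rw [← lintegral_indicator hAΩ]
    refine lintegral_congr fun ω => ?_
    by_cases hω : ω ∈ A
    · have harg : x + rh * θ + σ * (W t ω + (W θ ω - W t ω)) = x + rh * θ + σ * W θ ω := by
        ring
      simp [H, V, ξ, Set.indicator_of_mem hω, harg]
    · simp [H, V, Set.indicator_of_notMem hω]
  have hmid : ∫⁻ ω, H (V ω, ξ ω) ∂P
      = ∫⁻ p, ENNReal.ofReal p.2 * Qker r σ f (θ - t) (x + rh * t + σ * p.1) ∂(P.map V) := by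
    rw [← lintegral_map hH (hV.prodMk hξ), hmap]
    haveI : IsProbabilityMeasure (P.map ξ) := Measure.isProbabilityMeasure_map hξ.aemeasurable
    rw [lintegral_prod _ hH.aemeasurable]
    refine lintegral_congr fun p => ?_
    simp only [hHdef]
    rw [lintegral_const_mul _ (by fun_prop : Measurable fun u : ℝ => ENNReal.ofReal (f (x + rh * θ + σ * (p.1 + u))))]
    congr 1
    rw [hWgauss t θ ht htθ]
    have hmm : (gaussianReal 0 (Real.toNNReal (θ - t))).map
          (fun u => (x + rh * θ + σ * p.1) + σ * u)
        = gaussianReal (x + rh * θ + σ * p.1) (Real.toNNReal (σ ^ 2 * (θ - t))) := by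
      have h1 : (fun u : ℝ => (x + rh * θ + σ * p.1) + σ * u)
          = (fun z : ℝ => (x + rh * θ + σ * p.1) + z) ∘ (fun u : ℝ => σ * u) := by
        funext u; rfl
      rw [h1, ← Measure.map_map (by fun_prop) (by fun_prop)]
      rw [show (fun u : ℝ => σ * u) = (σ * ·) from rfl, gaussianReal_map_const_mul]
      rw [show (fun z : ℝ => (x + rh * θ + σ * p.1) + z) = ((x + rh * θ + σ * p.1) + ·)
        from rfl, gaussianReal_map_const_add]
      congr 1
      · ring
      · rw [Real.toNNReal_mul (by positivity)]
        congr 1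
        ext
        simp [Real.coe_toNNReal _ (sq_nonneg σ)]
    rw [Qker]
    have harg2 : x + rh * t + σ * p.1 + rh * (θ - t) = x + rh * θ + σ * p.1 := by ring
    rw [harg2, ← hmm, lintegral_map (by fun_prop) (by fun_prop)]
    refine lintegral_congr fun u => ?_
    congr 2
    ring
  have hR : ∫⁻ p, ENNReal.ofReal p.2 * Qker r σ f (θ - t) (x + rh * t + σ * p.1) ∂(P.map V)
      = ∫⁻ ω in A, Qker r σ f (θ - t) (x + rh * t + σ * W t ω) ∂P := by
    rw [lintegral_map hGm hV, ← lintegral_indicator hAΩ]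
    refine lintegral_congr fun ω => ?_
    by_cases hω : ω ∈ A
    · simp [V, Set.indicator_of_mem hω]
    · simp [V, Set.indicator_of_notMem hω]
  exact hL.trans (hmid.trans hR)

lemma rep_finset {Ω : Type*} (τn : Ω → ℝ) (D : Finset ℝ) (hD : ∀ ω, τn ω ∈ D)
    (G : ℝ → Ω → ℝ≥0∞) :
    (fun ω => G (τn ω) ω) = fun ω => ∑ d ∈ D, Set.indicator {ω' | τn ω' = d} (G d) ω := by
  funext ω
  rw [Finset.sum_eq_single_of_mem (τn ω) (hD ω)]
  · rw [Set.indicator_of_mem (by simp : ω ∈ {ω' | τn ω' = τn ω})]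
  · intro d _ hne
    exact Set.indicator_of_notMem (fun h => hne ((Set.mem_setOf_eq ▸ h).symm)) _

lemma sum_key {Ω : Type*} {mΩ : MeasurableSpace Ω} (P : Measure Ω) [IsProbabilityMeasure P]
    (F : Filtration ℝ mΩ) (W : ℝ → Ω → ℝ)
    (hWadapted : Adapted F W)
    (hWgauss : ∀ s t : ℝ, 0 ≤ s → s ≤ t →
      P.map (fun ω => W t ω - W s ω) = gaussianReal 0 (Real.toNNReal (t - s)))
    (hWindep : ∀ s t : ℝ, 0 ≤ s → s ≤ t →
      Indep (MeasurableSpace.comap (fun ω => W t ω - W s ω) (borel ℝ)) (F s) P)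
    (r σ x : ℝ) (hσ : 0 < σ) {f : ℝ → ℝ} (hfm : Measurable f)
    {θ : ℝ} {τn : Ω → ℝ} (hτn : IsStoppingTime F (fun ω => (τn ω : WithTop ℝ))) (D : Finset ℝ) (hD : ∀ ω, τn ω ∈ D)
    (hD0 : ∀ d ∈ D, 0 ≤ d ∧ d ≤ θ) :
    Measurable (fun ω =>
        Qker r σ f (θ - τn ω) (x + (r - σ ^ 2 / 2) * τn ω + σ * W (τn ω) ω)) ∧
    ∫⁻ ω, Qker r σ f (θ - τn ω) (x + (r - σ ^ 2 / 2) * τn ω + σ * W (τn ω) ω) ∂P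
      = ∫⁻ ω, ENNReal.ofReal (f (x + (r - σ ^ 2 / 2) * θ + σ * W θ ω)) ∂P := by
  set rh : ℝ := r - σ ^ 2 / 2 with hrh
  have hcnt : (Set.range τn).Countable := by
    refine Set.Countable.mono ?_ (D : Set ℝ).to_countable
    rintro _ ⟨ω, rfl⟩; exact hD ω
  set G : ℝ → Ω → ℝ≥0∞ := fun d ω => Qker r σ f (θ - d) (x + rh * d + σ * W d ω) with hGdef
  have hGmeas : ∀ d : ℝ, Measurable (G d) := by
    intro d
    have hWd : Measurable (W d) := ((hWadapted d)).mono (F.le d) le_rfl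
    exact (measurable_Qker r σ f hfm (θ - d)).comp
      (measurable_const.add (hWd.const_mul σ))
  have hmeasF : ∀ d : ℝ, MeasurableSet[F d] {ω | τn ω = d} :=
    fun d => by
      simpa only [WithTop.coe_eq_coe] using hτn.measurableSet_eq_of_countable_range
        ((hcnt.image (fun y : ℝ => (y : WithTop ℝ))).mono
          (by rintro _ ⟨ω, rfl⟩; exact ⟨τn ω, ⟨ω, rfl⟩, rfl⟩)) d
  have hmeasSet : ∀ d : ℝ, MeasurableSet {ω | τn ω = d} :=
    fun d => F.le d _ (hmeasF d)
  have hrep := rep_finset τn D hD G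
  have hZrep := rep_finset τn D hD (fun _ ω => ENNReal.ofReal (f (x + rh * θ + σ * W θ ω)))
  have hmeasmain : Measurable (fun ω => G (τn ω) ω) := by
    rw [hrep]
    exact Finset.measurable_sum _ (fun d _ => (hGmeas d).indicator (hmeasSet d))
  refine ⟨hmeasmain, ?_⟩
  have hWth : Measurable (W θ) := ((hWadapted θ)).mono (F.le θ) le_rfl
  have hZmeas : Measurable (fun ω => ENNReal.ofReal (f (x + rh * θ + σ * W θ ω))) := by
    fun_prop
  rw [hrep, hZrep,
    lintegral_finset_sum _ (fun d _ => (hGmeas d).indicator (hmeasSet d)),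
    lintegral_finset_sum _ (fun d _ => hZmeas.indicator (hmeasSet d))]
  refine Finset.sum_congr rfl fun d hd => ?_
  rw [lintegral_indicator (hmeasSet d), lintegral_indicator (hmeasSet d)]
  exact (key_lemma P F W hWadapted hWgauss hWindep r σ x hσ hfm (hD0 d hd).1 (hD0 d hd).2
    (hmeasF d)).symm

lemma grid_isStoppingTime {Ω : Type*} {mΩ : MeasurableSpace Ω} {F : Filtration ℝ mΩ}
    {τ : Ω → ℝ} (hτ : IsStoppingTime F (fun ω => (τ ω : WithTop ℝ))) {Δ : ℝ} (hΔ : 0 < Δ) :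
    IsStoppingTime F (fun ω => ((Δ * (⌈τ ω / Δ⌉ : ℝ) : ℝ) : WithTop ℝ)) := by
  intro t
  have hset : {ω | Δ * ((⌈τ ω / Δ⌉ : ℤ) : ℝ) ≤ t} = {ω | τ ω ≤ Δ * ((⌊t / Δ⌋ : ℤ) : ℝ)} := by
    ext ω
    simp only [Set.mem_setOf_eq]
    rw [mul_comm Δ ((⌈τ ω / Δ⌉ : ℤ) : ℝ), ← le_div_iff₀ hΔ, ← Int.le_floor, Int.ceil_le,
      div_le_iff₀ hΔ, mul_comm ((⌊t / Δ⌋ : ℤ) : ℝ) Δ]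
  simp only [WithTop.coe_le_coe]
  show MeasurableSet[F t] {ω | Δ * ((⌈τ ω / Δ⌉ : ℤ) : ℝ) ≤ t}
  rw [hset]
  have hle : Δ * ((⌊t / Δ⌋ : ℤ) : ℝ) ≤ t := by
    rw [mul_comm, ← le_div_iff₀ hΔ]
    exact Int.floor_le _
  exact F.mono hle _ (by simpa only [WithTop.coe_le_coe] using hτ (Δ * ((⌊t / Δ⌋ : ℤ) : ℝ)))

lemma vEu_nonneg (r σ : ℝ) {f : ℝ → ℝ} (hf0 : ∀ x, 0 ≤ f x) (θ x : ℝ) :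
    0 ≤ vEu r σ f θ x := by
  rw [vEu]
  split_ifs
  · exact hf0 x
  · exact mul_nonneg (Real.exp_nonneg _)
      (integral_nonneg fun z => mul_nonneg (gauss_nonneg _ _ _) (hf0 z))

lemma ofReal_vEu {r σ T : ℝ} (hσ : 0 < σ) {f : ℝ → ℝ} (hfm : Measurable f)
    (hf0 : ∀ x, 0 ≤ f x)
    (hfint : ∀ θ ∈ Set.Icc (0 : ℝ) T, ∀ x : ℝ,
      Integrable (fun y => gauss (x + (r - σ ^ 2 / 2) * θ) (σ ^ 2 * θ) y * f y))
    {s : ℝ} (hs : s ∈ Set.Icc (0 : ℝ) T) (y : ℝ) :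
    ENNReal.ofReal (vEu r σ f s y)
      = ENNReal.ofReal (Real.exp (-(r * s))) * Qker r σ f s y := by
  rcases eq_or_lt_of_le hs.1 with h0 | h0
  · subst h0
    rw [vEu, if_pos rfl, Qker_zero r σ f hfm y]
    simp
  · rw [vEu, if_neg (ne_of_gt h0), ENNReal.ofReal_mul (Real.exp_nonneg _),
      Qker_eq_ofReal_integral f hfm hf0 hσ hfint h0 hs.2 y]

lemma upper_bound_per_tau {Ω : Type*} {mΩ : MeasurableSpace Ω} (P : Measure Ω)
    [IsProbabilityMeasure P]
    (F : Filtration ℝ mΩ) (W : ℝ → Ω → ℝ)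
    (hW0 : ∀ᵐ ω ∂P, W 0 ω = 0)
    (hWcont : ∀ ω, Continuous fun t => W t ω)
    (hWadapted : Adapted F W)
    (hWgauss : ∀ s t : ℝ, 0 ≤ s → s ≤ t →
      P.map (fun ω => W t ω - W s ω) = gaussianReal 0 (Real.toNNReal (t - s)))
    (hWindep : ∀ s t : ℝ, 0 ≤ s → s ≤ t →
      Indep (MeasurableSpace.comap (fun ω => W t ω - W s ω) (borel ℝ)) (F s) P)
    {r σ T : ℝ} (hr : 0 ≤ r) (hσ : 0 < σ)
    {g : ℝ → ℝ} (hg0 : ∀ x, 0 ≤ g x)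
    {f : ℝ → ℝ} (hfm : Measurable f) (hf0 : ∀ x, 0 ≤ f x)
    (hfint : ∀ θ ∈ Set.Icc (0 : ℝ) T, ∀ x : ℝ,
      Integrable (fun y => gauss (x + (r - σ ^ 2 / 2) * θ) (σ ^ 2 * θ) y * f y))
    (hdom : ∀ θ ∈ Set.Icc (0 : ℝ) T, ∀ x : ℝ, g x ≤ vEu r σ f θ x)
    {θ : ℝ} (hθ : θ ∈ Set.Icc (0 : ℝ) T) (hθpos : 0 < θ) (x : ℝ)
    {τ : Ω → ℝ} (hst : IsStoppingTime F (fun ω => (τ ω : WithTop ℝ))) (hτmem : ∀ ω, τ ω ∈ Set.Icc 0 θ) :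
    ∫ ω, Real.exp (-(r * τ ω)) * g (x + (r - σ ^ 2 / 2) * τ ω + σ * W (τ ω) ω) ∂P
      ≤ vEu r σ f θ x := by
  set rh : ℝ := r - σ ^ 2 / 2 with hrh
  set φ : Ω → ℝ := fun ω => Real.exp (-(r * τ ω)) * g (x + rh * τ ω + σ * W (τ ω) ω) with hφ
  have hφ0 : ∀ ω, 0 ≤ φ ω := fun ω => mul_nonneg (Real.exp_nonneg _) (hg0 _)
  by_cases hsm : AEStronglyMeasurable φ P
  swap
  · rw [integral_non_aestronglyMeasurable hsm]
    exact vEu_nonneg r σ hf0 θ x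
  rw [integral_eq_lintegral_of_nonneg_ae (Filter.Eventually.of_forall hφ0) hsm]
  suffices hkey : ∫⁻ ω, ENNReal.ofReal (φ ω) ∂P ≤ ENNReal.ofReal (vEu r σ f θ x) by
    calc (∫⁻ ω, ENNReal.ofReal (φ ω) ∂P).toReal
        ≤ (ENNReal.ofReal (vEu r σ f θ x)).toReal :=
          ENNReal.toReal_mono ENNReal.ofReal_ne_top hkey
      _ = vEu r σ f θ x := ENNReal.toReal_ofReal (vEu_nonneg r σ hf0 θ x)
  -- discretization of τ
  set Δ : ℕ → ℝ := fun n => θ / 2 ^ n with hΔdef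
  have hΔpos : ∀ n, 0 < Δ n := fun n => by rw [hΔdef]; positivity
  set τn : ℕ → Ω → ℝ := fun n ω => Δ n * (⌈τ ω / Δ n⌉ : ℝ) with hτndef
  have hst_n : ∀ n, IsStoppingTime F (fun ω => (τn n ω : WithTop ℝ)) := fun n => grid_isStoppingTime hst (hΔpos n)
  have hτle : ∀ n ω, τ ω ≤ τn n ω := by
    intro n ω
    have h := Int.le_ceil (τ ω / Δ n)
    calc τ ω = Δ n * (τ ω / Δ n) := by have := (hΔpos n).ne'; field_simp
      _ ≤ Δ n * (⌈τ ω / Δ n⌉ : ℝ) := mul_le_mul_of_nonneg_left h (hΔpos n).le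
  have hτnle : ∀ n ω, τn n ω ≤ τ ω + Δ n := by
    intro n ω
    have h := (Int.ceil_lt_add_one (τ ω / Δ n)).le
    calc τn n ω = Δ n * (⌈τ ω / Δ n⌉ : ℝ) := rfl
      _ ≤ Δ n * (τ ω / Δ n + 1) := mul_le_mul_of_nonneg_left h (hΔpos n).le
      _ = τ ω + Δ n := by have := (hΔpos n).ne'; field_simp
  have hτn_grid : ∀ n ω, τn n ω ∈ (Finset.range (2 ^ n + 1)).image (fun k : ℕ => Δ n * k) := by
    intro n ω
    have h0 : (0 : ℤ) ≤ ⌈τ ω / Δ n⌉ := Int.ceil_nonneg (div_nonneg (hτmem ω).1 (hΔpos n).le)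
    have h1 : ⌈τ ω / Δ n⌉ ≤ (2 ^ n : ℤ) := by
      refine Int.ceil_le.2 ?_
      rw [div_le_iff₀ (hΔpos n)]
      push_cast
      calc τ ω ≤ θ := (hτmem ω).2
        _ = 2 ^ n * Δ n := by rw [hΔdef]; field_simp
    refine Finset.mem_image.2 ⟨(⌈τ ω / Δ n⌉).toNat, ?_, ?_⟩
    · rw [Finset.mem_range, Nat.lt_succ_iff]
      have h1' : ⌈τ ω / Δ n⌉ ≤ ((2 ^ n : ℕ) : ℤ) := by exact_mod_cast h1
      exact Int.toNat_le.2 h1'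
    · rw [hτndef]
      congr 1
      exact_mod_cast congrArg (fun z : ℤ => (z : ℝ)) (Int.toNat_of_nonneg h0)
  have hgrid_mem : ∀ n, ∀ d ∈ (Finset.range (2 ^ n + 1)).image (fun k : ℕ => Δ n * k),
      0 ≤ d ∧ d ≤ θ := by
    intro n d hd
    obtain ⟨k, hk, rfl⟩ := Finset.mem_image.1 hd
    refine ⟨by positivity, ?_⟩
    have hk' : (k : ℝ) ≤ 2 ^ n := by exact_mod_cast Nat.lt_succ_iff.1 (Finset.mem_range.1 hk)
    calc Δ n * k ≤ Δ n * 2 ^ n := mul_le_mul_of_nonneg_left hk' (hΔpos n).le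
      _ = θ := by rw [hΔdef]; field_simp
  have hτn_le : ∀ n ω, τn n ω ≤ θ := fun n ω => (hgrid_mem n _ (hτn_grid n ω)).2
  have hSK : ∀ n : ℕ,
      Measurable (fun ω => Qker r σ f (θ - τn n ω) (x + rh * τn n ω + σ * W (τn n ω) ω)) ∧
      ∫⁻ ω, Qker r σ f (θ - τn n ω) (x + rh * τn n ω + σ * W (τn n ω) ω) ∂P
        = ∫⁻ ω, ENNReal.ofReal (f (x + rh * θ + σ * W θ ω)) ∂P :=
    fun n => sum_key P F W hWadapted hWgauss hWindep r σ x hσ hfm (hst_n n) _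
      (hτn_grid n) (hgrid_mem n)
  set Un : ℕ → Ω → ℝ≥0∞ := fun n ω => ENNReal.ofReal (Real.exp (-(r * θ)))
    * Qker r σ f (θ - τn n ω) (x + rh * τn n ω + σ * W (τn n ω) ω) with hUndef
  set U : Ω → ℝ≥0∞ := fun ω => ENNReal.ofReal (Real.exp (-(r * θ)))
    * Qker r σ f (θ - τ ω) (x + rh * τ ω + σ * W (τ ω) ω) with hUdef
  have hZint : ∫⁻ ω, ENNReal.ofReal (f (x + rh * θ + σ * W θ ω)) ∂P = Qker r σ f θ x := by
    have h := key_lemma P F W hWadapted hWgauss hWindep r σ x hσ hfm (le_refl (0:ℝ))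
      hθpos.le (A := Set.univ) MeasurableSet.univ
    rw [Measure.restrict_univ] at h
    rw [h]
    have hae : ∀ᵐ ω ∂P, Qker r σ f (θ - 0) (x + rh * 0 + σ * W 0 ω) = Qker r σ f θ x := by
      filter_upwards [hW0] with ω h0
      rw [h0]
      norm_num
    rw [lintegral_congr_ae hae, lintegral_const, measure_univ, mul_one]
  have hθIcc : θ ∈ Set.Icc (0 : ℝ) T := hθ
  have hUnint : ∀ n, ∫⁻ ω, Un n ω ∂P = ENNReal.ofReal (vEu r σ f θ x) := by
    intro n
    simp only [hUndef]
    rw [lintegral_const_mul _ (hSK n).1, (hSK n).2, hZint, ← ofReal_vEu hσ hfm hf0 hfint hθIcc x]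
  have hULe : ∀ ω, ENNReal.ofReal (φ ω) ≤ U ω := by
    intro ω
    have hmem : θ - τ ω ∈ Set.Icc (0 : ℝ) T :=
      ⟨by linarith [(hτmem ω).2], by linarith [(hτmem ω).1, hθ.2]⟩
    have hd := hdom (θ - τ ω) hmem (x + rh * τ ω + σ * W (τ ω) ω)
    have h1 : φ ω ≤ Real.exp (-(r * τ ω))
        * vEu r σ f (θ - τ ω) (x + rh * τ ω + σ * W (τ ω) ω) :=
      mul_le_mul_of_nonneg_left hd (Real.exp_nonneg _)
    calc ENNReal.ofReal (φ ω)
        ≤ ENNReal.ofReal (Real.exp (-(r * τ ω))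
          * vEu r σ f (θ - τ ω) (x + rh * τ ω + σ * W (τ ω) ω)) := ENNReal.ofReal_le_ofReal h1
      _ = ENNReal.ofReal (Real.exp (-(r * τ ω)))
          * ENNReal.ofReal (vEu r σ f (θ - τ ω) (x + rh * τ ω + σ * W (τ ω) ω)) :=
          ENNReal.ofReal_mul (Real.exp_nonneg _)
      _ = ENNReal.ofReal (Real.exp (-(r * τ ω))) * (ENNReal.ofReal (Real.exp (-(r * (θ - τ ω))))
          * Qker r σ f (θ - τ ω) (x + rh * τ ω + σ * W (τ ω) ω)) := by
          rw [ofReal_vEu hσ hfm hf0 hfint hmem]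
      _ = U ω := by
          rw [← mul_assoc, ← ENNReal.ofReal_mul (Real.exp_nonneg _), ← Real.exp_add]
          congr 2
          ring
  have hΔlim : Tendsto Δ atTop (𝓝 0) := by
    have h1 : Tendsto (fun n : ℕ => θ * (1 / 2 : ℝ) ^ n) atTop (𝓝 (θ * 0)) :=
      tendsto_const_nhds.mul (tendsto_pow_atTop_nhds_zero_of_lt_one (by norm_num) (by norm_num))
    rw [mul_zero] at h1
    refine h1.congr fun n => ?_
    rw [hΔdef]
    rw [div_pow, one_pow, div_eq_mul_inv, mul_comm (1 : ℝ)]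
    ring_nf
  have hUconv : ∀ ω, Tendsto (fun n => Un n ω) atTop (𝓝 (U ω)) := by
    intro ω
    rcases eq_or_lt_of_le (hτmem ω).1 with h0 | h0
    · have hz : ∀ n, τn n ω = 0 := by
        intro n
        rw [hτndef]
        simp [← h0]
      have hconst : ∀ n, Un n ω = U ω := by
        intro n
        simp only [hUndef, hUdef, hz n, ← h0]
      rw [show (fun n => Un n ω) = fun _ => U ω from funext hconst]
      exact tendsto_const_nhds
    · rcases eq_or_lt_of_le (hτmem ω).2 with hθeq | hlt
      · have hz : ∀ n, τn n ω = θ := fun n => le_antisymm (hτn_le n ω) (hθeq ▸ hτle n ω)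
        have hconst : ∀ n, Un n ω = U ω := by
          intro n
          simp only [hUndef, hUdef, hz n, hθeq]
        rw [show (fun n => Un n ω) = fun _ => U ω from funext hconst]
        exact tendsto_const_nhds
      · refine ENNReal.Tendsto.const_mul ?_ (Or.inr ENNReal.ofReal_ne_top)
        have htt : Tendsto (fun n => τn n ω) atTop (𝓝 (τ ω)) := by
          have hup : Tendsto (fun n => τ ω + Δ n) atTop (𝓝 (τ ω + 0)) :=
            tendsto_const_nhds.add hΔlim
          rw [add_zero] at hup
          exact tendsto_of_tendsto_of_tendsto_of_le_of_le tendsto_const_nhds hup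
            (fun n => hτle n ω) (fun n => hτnle n ω)
        have hsn : Tendsto (fun n => θ - τn n ω) atTop (𝓝 (θ - τ ω)) :=
          tendsto_const_nhds.sub htt
        have hyn : Tendsto (fun n => x + rh * τn n ω + σ * W (τn n ω) ω) atTop
            (𝓝 (x + rh * τ ω + σ * W (τ ω) ω)) := by
          have hWc : Tendsto (fun n => W (τn n ω) ω) atTop (𝓝 (W (τ ω) ω)) :=
            (((hWcont ω).tendsto (τ ω)).comp htt)
          exact (tendsto_const_nhds.add (tendsto_const_nhds.mul htt)).add
            (tendsto_const_nhds.mul hWc)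
        exact tendsto_Qker hσ hfm hf0 hfint (by linarith) (by linarith [hθ.2]) hsn hyn
  calc ∫⁻ ω, ENNReal.ofReal (φ ω) ∂P ≤ ∫⁻ ω, U ω ∂P := lintegral_mono hULe
    _ = ∫⁻ ω, liminf (fun n => Un n ω) atTop ∂P :=
        lintegral_congr fun ω => ((hUconv ω).liminf_eq).symm
    _ ≤ liminf (fun n => ∫⁻ ω, Un n ω ∂P) atTop :=
        lintegral_liminf_le (fun n => measurable_const.mul (hSK n).1)
    _ = ENNReal.ofReal (vEu r σ f θ x) := by
        simp only [hUnint]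
        exact liminf_const _

/-- If a European payoff `f` dominates `g` up to `T`, then
`g ≤ v_am ≤ v_f` on `[0,T] × ℝ`; in particular
`g(x) ≤ inf_{θ∈[0,T]} v_f(θ,x) ≤ f(x)` for every `x`. -/
theorem dominating_European_bounds_American
    {Ω : Type*} {mΩ : MeasurableSpace Ω} (P : Measure Ω) [IsProbabilityMeasure P]
    (F : Filtration ℝ mΩ) (W : ℝ → Ω → ℝ)
    (hW0 : ∀ᵐ ω ∂P, W 0 ω = 0)
    (hWcont : ∀ ω, Continuous fun t => W t ω)
    (hWadapted : Adapted F W)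
    (hWgauss : ∀ s t : ℝ, 0 ≤ s → s ≤ t →
      P.map (fun ω => W t ω - W s ω) = ProbabilityTheory.gaussianReal 0 (Real.toNNReal (t - s)))
    (hWindep : ∀ s t : ℝ, 0 ≤ s → s ≤ t →
      ProbabilityTheory.Indep
        (MeasurableSpace.comap (fun ω => W t ω - W s ω) (borel ℝ)) (F s) P)
    (r σ T : ℝ) (hr : 0 ≤ r) (hσ : 0 < σ) (hT : 0 < T)
    (g : ℝ → ℝ) (hgusc : UpperSemicontinuous g) (hg0 : ∀ x, 0 ≤ g x)
    (hgint : ∀ x : ℝ, Integrable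
      (fun ω => ⨆ t : Set.Icc (0 : ℝ) T, g (x + (r - σ ^ 2 / 2) * t.1 + σ * W t.1 ω)) P)
    (f : ℝ → ℝ) (hfm : Measurable f) (hf0 : ∀ x, 0 ≤ f x)
    (hfint : ∀ θ ∈ Set.Icc (0 : ℝ) T, ∀ x : ℝ,
      Integrable (fun y => gauss (x + (r - σ ^ 2 / 2) * θ) (σ ^ 2 * θ) y * f y))
    (hdom : ∀ θ ∈ Set.Icc (0 : ℝ) T, ∀ x : ℝ, g x ≤ vEu r σ f θ x) :
    (∀ θ ∈ Set.Icc (0 : ℝ) T, ∀ x : ℝ,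
      g x ≤ vAm P F W r σ g θ x ∧ vAm P F W r σ g θ x ≤ vEu r σ f θ x) ∧
    (∀ x : ℝ, g x ≤ (⨅ θ : Set.Icc (0 : ℝ) T, vEu r σ f θ.1 x) ∧
      (⨅ θ : Set.Icc (0 : ℝ) T, vEu r σ f θ.1 x) ≤ f x) := by
  constructor
  · intro θ hθ x
    set rh : ℝ := r - σ ^ 2 / 2 with hrh
    set S : Set ℝ := {e : ℝ | ∃ τ : Ω → ℝ, IsStoppingTime F (fun ω => (τ ω : WithTop ℝ)) ∧ (∀ ω, τ ω ∈ Set.Icc 0 θ) ∧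
      e = ∫ ω, Real.exp (-(r * τ ω)) * g (x + rh * τ ω + σ * W (τ ω) ω) ∂P} with hS
    have hvam : vAm P F W r σ g θ x = sSup S := rfl
    -- the zero stopping time gives the element `g x`
    have hzint : ∀ τ : Ω → ℝ, (∀ ω, τ ω = 0) →
        ∫ ω, Real.exp (-(r * τ ω)) * g (x + rh * τ ω + σ * W (τ ω) ω) ∂P = g x := by
      intro τ hτ0
      have hae : ∀ᵐ ω ∂P,
          Real.exp (-(r * τ ω)) * g (x + rh * τ ω + σ * W (τ ω) ω) = g x := by
        filter_upwards [hW0] with ω h0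
        rw [hτ0 ω, h0]
        simp
      rw [integral_congr_ae hae, integral_const, probReal_univ]
      simp
    have hmem0 : (∫ ω, Real.exp (-(r * (fun _ : Ω => (0:ℝ)) ω))
        * g (x + rh * (fun _ : Ω => (0:ℝ)) ω + σ * W ((fun _ : Ω => (0:ℝ)) ω) ω) ∂P) ∈ S := by
      refine ⟨fun _ => 0, isStoppingTime_const F 0, fun ω => ⟨le_refl 0, hθ.1⟩, rfl⟩
    have hmem0' : g x ∈ S := by
      have := hzint (fun _ => 0) (fun _ => rfl)
      rwa [this] at hmem0
    -- S is bounded above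
    have hBdd : BddAbove S := by
      refine ⟨∫ ω, (⨆ t : Set.Icc (0 : ℝ) T, g (x + rh * t.1 + σ * W t.1 ω)) ∂P, ?_⟩
      rintro e ⟨τ, hst, hτmem, rfl⟩
      set φ : Ω → ℝ := fun ω => Real.exp (-(r * τ ω)) * g (x + rh * τ ω + σ * W (τ ω) ω)
        with hφ
      by_cases hsm : AEStronglyMeasurable φ P
      swap
      · rw [integral_non_aestronglyMeasurable hsm]
        exact integral_nonneg fun ω => Real.iSup_nonneg fun t => hg0 _
      refine integral_mono_of_nonneg
        (Filter.Eventually.of_forall fun ω => mul_nonneg (Real.exp_nonneg _) (hg0 _))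
        (hgint x) (Filter.Eventually.of_forall fun ω => ?_)
      have hcont : Continuous (fun t : ℝ => x + rh * t + σ * W t ω) := by
        refine (continuous_const.add (continuous_const.mul continuous_id)).add ?_
        exact continuous_const.mul (hWcont ω)
      have hK : IsCompact ((fun t : ℝ => x + rh * t + σ * W t ω) '' Set.Icc 0 T) :=
        isCompact_Icc.image hcont
      have hBA : BddAbove (Set.range (fun t : Set.Icc (0 : ℝ) T =>
          g (x + rh * t.1 + σ * W t.1 ω))) := by
        refine (usc_bddAbove hgusc hK).mono ?_
        rintro _ ⟨t, rfl⟩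
        exact ⟨x + rh * t.1 + σ * W t.1 ω, ⟨t.1, t.2, rfl⟩, rfl⟩
      have hτT : τ ω ∈ Set.Icc (0 : ℝ) T := ⟨(hτmem ω).1, le_trans (hτmem ω).2 hθ.2⟩
      have hle1 : φ ω ≤ g (x + rh * τ ω + σ * W (τ ω) ω) := by
        refine mul_le_of_le_one_left (hg0 _) ?_
        rw [Real.exp_le_one_iff]
        have := (hτmem ω).1
        nlinarith
      exact le_trans hle1 (le_ciSup hBA ⟨τ ω, hτT⟩)
    constructor
    · rw [hvam]
      exact le_csSup hBdd hmem0'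
    · rw [hvam]
      refine csSup_le ⟨g x, hmem0'⟩ ?_
      rintro e ⟨τ, hst, hτmem, rfl⟩
      rcases eq_or_lt_of_le hθ.1 with hθ0 | hθ0
      · -- θ = 0 : every stopping time is 0
        have hτ0 : ∀ ω, τ ω = 0 := fun ω =>
          le_antisymm (by rw [← hθ0] at hτmem; exact (hτmem ω).2) (hτmem ω).1
        rw [hzint τ hτ0]
        exact hdom θ hθ x
      · exact upper_bound_per_tau P F W hW0 hWcont hWadapted hWgauss hWindep hr hσ
          hg0 hfm hf0 hfint hdom hθ hθ0 x hst hτmem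
  · intro x
    haveI : Nonempty (Set.Icc (0 : ℝ) T) := ⟨⟨0, le_refl 0, hT.le⟩⟩
    constructor
    · exact le_ciInf fun θ' => hdom θ'.1 θ'.2 x
    · have hBdd : BddBelow (Set.range fun θ' : Set.Icc (0 : ℝ) T => vEu r σ f θ'.1 x) := by
        refine ⟨0, ?_⟩
        rintro _ ⟨θ', rfl⟩
        exact vEu_nonneg r σ hf0 θ'.1 x
      have h0 : vEu r σ f (0 : ℝ) x = f x := if_pos rfl
      exact ciInf_le_of_le hBdd ⟨0, le_refl 0, hT.le⟩ h0.le
end
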